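/- arXiv:1710.05892 — 4 statements merged into one kernel-verified Lean document; each statement's English description precedes it below -/
import Mathlib

section
/- Let m, n be positive integers and let R₀, R₁ be positive semidefinite complex (mn)×(mn) matrices such that R₀ + R₁ = S ⊗ T (Kronecker product), where S is a positive semidefinite m×m matrix of rank 1 and T is a positive semidefinite n×n matrix. Then there exist positive semidefinite n×n matrices T₀, T₁ such that Rⱼ = S ⊗ Tⱼ for j = 0, 1. -/
open Matrix Kronecker ComplexOrder

lemma aux_add_eq_zero {a b : ℂ} (ha : 0 ≤ a) (hb : 0 ≤ b) (hab : a + b = 0) : a = 0 :=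
  le_antisymm (by calc a ≤ a + b := le_add_of_nonneg_right hb
                    _ = 0 := hab) ha

lemma aux_factor {m n : ℕ} (R : Matrix (Fin m × Fin n) (Fin m × Fin n) ℂ)
    (S : Matrix (Fin m) (Fin m) ℂ)
    (hR : R.PosSemidef) (i₀ : Fin m) (hd : S i₀ i₀ ≠ 0) (hd0 : 0 ≤ S i₀ i₀)
    (hSH : ∀ i j, star (S j i) = S i j)
    (hminor : ∀ i j, S i j * S i₀ i₀ = S i i₀ * S i₀ j)
    (key : ∀ (i : Fin m) (a : Fin n) (j : Fin m) (b : Fin n),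
      S i₀ i₀ * R (i,a) (j,b) = S i₀ j * R (i,a) (i₀,b)) :
    ∃ T0 : Matrix (Fin n) (Fin n) ℂ, T0.PosSemidef ∧ R = S ⊗ₖ T0 := by
  have hdr : star (S i₀ i₀) = S i₀ i₀ := hSH i₀ i₀
  set d : ℂ := S i₀ i₀ with hdd
  refine ⟨Matrix.of fun a b => R (i₀,a) (i₀,b) * d⁻¹, posSemidef_iff_dotProduct_mulVec.mpr ⟨?_, ?_⟩, ?_⟩
  · -- Hermitian
    apply Matrix.IsHermitian.ext
    intro a b
    simp only [Matrix.of_apply, star_mul']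
    rw [hR.1.apply, star_inv₀, hdr]
  · -- nonneg quadratic form
    intro y
    have h1 := hR.dotProduct_mulVec_nonneg (fun p : Fin m × Fin n => (if p.1 = i₀ then 1 else 0) * y p.2)
    have hcalc : star (fun p : Fin m × Fin n => (if p.1 = i₀ then 1 else 0) * y p.2) ⬝ᵥ
        R *ᵥ (fun p : Fin m × Fin n => (if p.1 = i₀ then 1 else 0) * y p.2)
        = d * (star y ⬝ᵥ (Matrix.of fun a b => R (i₀,a) (i₀,b) * d⁻¹) *ᵥ y) := by
      simp only [dotProduct, mulVec, Fintype.sum_prod_type, Pi.star_apply, star_mul',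
        Matrix.of_apply, mul_ite, ite_mul, zero_mul, mul_zero, mul_one, one_mul,
        apply_ite (star : ℂ → ℂ), star_one, star_zero, Finset.sum_ite_eq', Finset.mem_univ,
        if_true, Finset.mul_sum]
      simp only [Finset.sum_ite_irrel, Finset.sum_const_zero, Finset.sum_ite_eq',
        Finset.mem_univ, if_true]
      refine Finset.sum_congr rfl fun a _ => Finset.sum_congr rfl fun c _ => ?_
      field_simp
    rw [hcalc] at h1
    -- deduce 0 ≤ star y ⬝ᵥ T0 *ᵥ y from 0 ≤ d * (...)
    obtain ⟨hre, him⟩ := Complex.nonneg_iff.mp hd0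
    have hdre : 0 < d.re := lt_of_le_of_ne hre fun hc => hd (Complex.ext hc.symm him.symm)
    set q : ℂ := star y ⬝ᵥ (Matrix.of fun a b => R (i₀,a) (i₀,b) * d⁻¹) *ᵥ y
    obtain ⟨h1re, h1im⟩ := Complex.nonneg_iff.mp h1
    rw [Complex.mul_re, ← him, zero_mul, sub_zero] at h1re
    rw [Complex.mul_im, ← him, zero_mul, add_zero] at h1im
    exact Complex.nonneg_iff.mpr ⟨nonneg_of_mul_nonneg_right h1re hdre,
      (mul_eq_zero.mp h1im.symm).resolve_left (ne_of_gt hdre) |>.symm⟩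
  · -- R = S ⊗ₖ T0
    ext ⟨i, a⟩ ⟨j, b⟩
    simp only [kroneckerMap_apply, Matrix.of_apply]
    -- step 1: R (i,a) (j,b) = S i₀ j * R (i,a) (i₀,b) / d
    -- step 2: R (i,a) (i₀,b) = S i i₀ * R (i₀,a) (i₀,b) / d
    have e2 : d * R (i,a) (i₀,b) = S i i₀ * R (i₀,a) (i₀,b) := by
      have h := key i₀ b i a
      have h' := congrArg star h
      simp only [star_mul'] at h'
      rw [hdr, hR.1.apply, hR.1.apply, hSH] at h'
      exact h'
    have e1 := key i a j b
    have hm := hminor i j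
    have big : d * (d * R (i,a) (j,b)) = (S i j * d) * R (i₀,a) (i₀,b) := by
      calc d * (d * R (i,a) (j,b)) = S i₀ j * (d * R (i,a) (i₀,b)) := by rw [e1]; ring
        _ = S i₀ j * (S i i₀ * R (i₀,a) (i₀,b)) := by rw [e2]
        _ = (S i i₀ * S i₀ j) * R (i₀,a) (i₀,b) := by ring
        _ = (S i j * d) * R (i₀,a) (i₀,b) := by rw [hm]
    have goal2 : d * (d * R (i,a) (j,b)) = d * (d * (S i j * (R (i₀,a) (i₀,b) * d⁻¹))) := by
      rw [big]; field_simp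
    exact mul_left_cancel₀ hd (mul_left_cancel₀ hd goal2)


/-- **Observation 1 (rank-1 factor forces product decomposition).**
If `R₀, R₁` are positive semidefinite matrices on the tensor product with
`R₀ + R₁ = S ⊗ T`, where `S` is positive semidefinite of rank 1 and `T` is
positive semidefinite, then each `Rⱼ` is of the form `S ⊗ Tⱼ` for some
positive semidefinite `Tⱼ`. -/
theorem rank_one_factor_product_decomposition
    (m n : ℕ) (hm : 0 < m) (hn : 0 < n)
    (R0 R1 : Matrix (Fin m × Fin n) (Fin m × Fin n) ℂ)
    (S : Matrix (Fin m) (Fin m) ℂ) (T : Matrix (Fin n) (Fin n) ℂ)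
    (hR0 : R0.PosSemidef) (hR1 : R1.PosSemidef)
    (hS : S.PosSemidef) (hT : T.PosSemidef)
    (hrank : S.rank = 1)
    (hsum : R0 + R1 = S ⊗ₖ T) :
    ∃ T0 T1 : Matrix (Fin n) (Fin n) ℂ,
      T0.PosSemidef ∧ T1.PosSemidef ∧ R0 = S ⊗ₖ T0 ∧ R1 = S ⊗ₖ T1 := by
  have hSH : ∀ i j, star (S j i) = S i j := hS.1.apply
  -- a nonzero entry of S
  have hS0 : S ≠ 0 := by
    intro h
    rw [h, Matrix.rank_zero] at hrank
    exact zero_ne_one hrank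
  obtain ⟨i₁, i₀, hne⟩ : ∃ i j, S i j ≠ 0 := by
    by_contra h
    push_neg at h
    exact hS0 (Matrix.ext fun i j => by simpa using h i j)
  -- quadratic form at a basis vector
  have hquad : ∀ j, star (Pi.single j 1 : Fin m → ℂ) ⬝ᵥ S *ᵥ Pi.single j 1 = S j j := by
    intro j
    have hstar : star (Pi.single j 1 : Fin m → ℂ) = Pi.single j 1 := by
      ext k
      simp [Pi.single_apply, apply_ite (star : ℂ → ℂ)]
    rw [hstar, Matrix.mulVec_single, single_dotProduct]
    simp
  -- the diagonal entry S i₀ i₀ is nonzero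
  have hd : S i₀ i₀ ≠ 0 := by
    intro h0
    have hq : star (Pi.single i₀ 1 : Fin m → ℂ) ⬝ᵥ S *ᵥ Pi.single i₀ 1 = 0 := by
      rw [hquad, h0]
    have hz := (hS.dotProduct_mulVec_zero_iff (Pi.single i₀ 1)).mp hq
    have hcol := congrFun hz i₁
    rw [Matrix.mulVec_single_one] at hcol
    simp only [mul_one, Pi.zero_apply, Matrix.col_apply] at hcol
    exact hne hcol
  have hd0 : 0 ≤ S i₀ i₀ := by rw [← hquad i₀]; exact hS.dotProduct_mulVec_nonneg _
  -- rank one gives vanishing 2×2 minors through column i₀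
  have hminor : ∀ i j, S i j * S i₀ i₀ = S i i₀ * S i₀ j := by
    have hnz : S *ᵥ Pi.single i₀ 1 ≠ 0 := by
      intro h
      have := congrFun h i₀
      rw [Matrix.mulVec_single_one] at this
      simp only [mul_one, Pi.zero_apply, Matrix.col_apply] at this
      exact hd this
    have hmem : S *ᵥ Pi.single i₀ 1 ∈ LinearMap.range S.mulVecLin :=
      ⟨Pi.single i₀ 1, rfl⟩
    have hle : Submodule.span ℂ {S *ᵥ Pi.single i₀ 1} ≤ LinearMap.range S.mulVecLin :=
      Submodule.span_le.mpr (by simpa using hmem)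
    have hrange : Submodule.span ℂ {S *ᵥ Pi.single i₀ 1} = LinearMap.range S.mulVecLin := by
      apply Submodule.eq_of_le_of_finrank_le hle
      rw [finrank_span_singleton hnz]
      exact le_of_eq hrank
    intro i j
    have hmemj : S *ᵥ Pi.single j 1 ∈ Submodule.span ℂ {S *ᵥ Pi.single i₀ 1} := by
      rw [hrange]; exact ⟨Pi.single j 1, rfl⟩
    obtain ⟨c, hc⟩ := Submodule.mem_span_singleton.mp hmemj
    have h1 := congrFun hc i
    have h2 := congrFun hc i₀
    simp only [Pi.smul_apply, Matrix.mulVec_single_one, Matrix.col_apply, mul_one, smul_eq_mul] at h1 h2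
    rw [← h1, ← h2]
    ring
  -- test vectors annihilated by S ⊗ₖ T
  set z : Fin m → Fin n → (Fin m × Fin n → ℂ) := fun j b p =>
    (S i₀ i₀ * (if p.1 = j then 1 else 0) - S i₀ j * (if p.1 = i₀ then 1 else 0)) *
      (if p.2 = b then 1 else 0) with hzdef
  have hzero : ∀ j b, (S ⊗ₖ T) *ᵥ z j b = 0 := by
    intro j b
    ext ⟨i, a⟩
    simp only [hzdef, Matrix.mulVec, dotProduct, Fintype.sum_prod_type,
      kroneckerMap_apply, Pi.zero_apply, mul_ite, ite_mul, mul_zero, zero_mul, mul_one,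
      one_mul, mul_sub, sub_mul, Finset.sum_sub_distrib, Finset.sum_ite_irrel,
      Finset.sum_const_zero, Finset.sum_ite_eq', Finset.mem_univ, if_true]
    have := hminor i j
    ring_nf
    linear_combination (T a b) * (hminor i j)
  have hmul : ∀ j b, R0 *ᵥ z j b = 0 ∧ R1 *ᵥ z j b = 0 := by
    intro j b
    have hsz : star (z j b) ⬝ᵥ R0 *ᵥ z j b + star (z j b) ⬝ᵥ R1 *ᵥ z j b = 0 := by
      rw [← dotProduct_add, ← Matrix.add_mulVec, hsum, hzero j b, dotProduct_zero]
    have q0 := hR0.dotProduct_mulVec_nonneg (z j b)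
    have q1 := hR1.dotProduct_mulVec_nonneg (z j b)
    exact ⟨(hR0.dotProduct_mulVec_zero_iff (z j b)).mp (aux_add_eq_zero q0 q1 hsz),
      (hR1.dotProduct_mulVec_zero_iff (z j b)).mp
        (aux_add_eq_zero q1 q0 (by rwa [add_comm] at hsz))⟩
  have hkey : ∀ (R' : Matrix (Fin m × Fin n) (Fin m × Fin n) ℂ),
      (∀ j b, R' *ᵥ z j b = 0) →
      ∀ (i : Fin m) (a : Fin n) (j : Fin m) (b : Fin n),
        S i₀ i₀ * R' (i,a) (j,b) = S i₀ j * R' (i,a) (i₀,b) := by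
    intro R' hz i a j b
    have := congrFun (hz j b) (i, a)
    simp only [hzdef, Matrix.mulVec, dotProduct, Fintype.sum_prod_type,
      Pi.zero_apply, mul_ite, ite_mul, mul_zero, zero_mul, mul_one, one_mul, mul_sub,
      sub_mul, Finset.sum_sub_distrib, Finset.sum_ite_irrel, Finset.sum_const_zero,
      Finset.sum_ite_eq', Finset.mem_univ, if_true] at this
    linear_combination this
  obtain ⟨T0, hT0, hRT0⟩ := aux_factor R0 S hR0 i₀ hd hd0 hSH hminor (hkey R0 fun j b => (hmul j b).1)
  obtain ⟨T1, hT1, hRT1⟩ := aux_factor R1 S hR1 i₀ hd hd0 hSH hminor (hkey R1 fun j b => (hmul j b).2)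
  exact ⟨T0, T1, hT0, hT1, hRT0, hRT1⟩
end

section
/- Let P ∈ Q_finite be a quantum behaviour in the (2,2,2,2) Bell scenario. Suppose P self-tests a canonical realisation (H_{A'}, H_{B'}, Ψ_{A'B'}, {P^x_a}, {Q^y_b}): that is, there are finite-dimensional complex Hilbert spaces H_{A'}, H_{B'}, a pure state Ψ_{A'B'} = |ψ⟩⟨ψ| on H_{A'} ⊗ H_{B'} whose reduced states on H_{A'} and H_{B'} are full-rank, and projective measurements {P^x_a} on H_{A'}, {Q^y_b} on H_{B'} realising P, such that for EVERY finite-dimensional realisation (H_A, H_B, ρ_{AB}, {E^x_a}, {F^y_b}) of P there exist finite-dimensional Hilbert spaces H_{A''}, H_{B''}, linear isometries V_A : H_A → H_{A'} ⊗ H_{A''} and V_B : H_B → H_{B'} ⊗ H_{B''}, and a state σ_{A''B''} on H_{A''} ⊗ H_{B''} with (V_A ⊗ V_B)[(E^x_a ⊗ F^y_b)ρ_{AB}](V_A ⊗ V_B)† = [(P^x_a ⊗ Q^y_b)Ψ_{A'B'}] ⊗ σ_{A''B''} for all a, b, x, y (under the natural reordering isomorphism H_{A'} ⊗ H_{A''}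 ⊗ H_{B'} ⊗ H_{B''} ≅ H_{A'} ⊗ H_{B'} ⊗ H_{A''} ⊗ H_{B''}). Then P is an extremal point of Q_finite: whenever P = q₀P₀ + q₁P₁ with q₀, q₁ ∈ (0,1), q₀ + q₁ = 1 and P₀, P₁ ∈ Q_finite, necessarily P₀ = P₁ = P. -/
open Matrix Kronecker ComplexOrder BigOperators

/-- A behaviour in the (2,2,2,2) Bell scenario: `P a b x y = P(ab|xy)`. -/
abbrev Behaviour : Type := Fin 2 → Fin 2 → Fin 2 → Fin 2 → ℝ

/-- `(ρ, E, F)` is a finite-dimensional quantum realisation of the behaviour `P`,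
with local Hilbert spaces of dimensions `dA` and `dB`. -/
def Realises (dA dB : ℕ) (ρ : Matrix (Fin dA × Fin dB) (Fin dA × Fin dB) ℂ)
    (E : Fin 2 → Fin 2 → Matrix (Fin dA) (Fin dA) ℂ)
    (F : Fin 2 → Fin 2 → Matrix (Fin dB) (Fin dB) ℂ)
    (P : Behaviour) : Prop :=
  ρ.PosSemidef ∧ ρ.trace = 1 ∧
  (∀ x a, (E x a).PosSemidef) ∧ (∀ y b, (F y b).PosSemidef) ∧
  (∀ x, ∑ a : Fin 2, E x a = 1) ∧ (∀ y, ∑ b : Fin 2, F y b = 1) ∧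
  ∀ a b x y, (P a b x y : ℂ) = ((E x a ⊗ₖ F y b) * ρ).trace

/-- The set of behaviours admitting a finite-dimensional quantum realisation. -/
def Qfinite : Set Behaviour :=
  {P | ∃ (dA dB : ℕ), 0 < dA ∧ 0 < dB ∧
    ∃ ρ E F, Realises dA dB ρ E F P}

/-- Reduced state of a bipartite (matrix) state on the first factor. -/
noncomputable def reducedA {dA dB : ℕ} (Ψ : Matrix (Fin dA × Fin dB) (Fin dA × Fin dB) ℂ) :
    Matrix (Fin dA) (Fin dA) ℂ :=
  fun i i' => ∑ j : Fin dB, Ψ (i, j) (i', j)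

/-- Reduced state of a bipartite (matrix) state on the second factor. -/
noncomputable def reducedB {dA dB : ℕ} (Ψ : Matrix (Fin dA × Fin dB) (Fin dA × Fin dB) ℂ) :
    Matrix (Fin dB) (Fin dB) ℂ :=
  fun j j' => ∑ i : Fin dA, Ψ (i, j) (i, j')

/-- The reordering equivalence `(A' ⊗ A'') ⊗ (B' ⊗ B'') ≅ (A' ⊗ B') ⊗ (A'' ⊗ B'')`. -/
def reorder (dA' dA'' dB' dB'' : ℕ) :
    (Fin dA' × Fin dA'') × (Fin dB' × Fin dB'') ≃
      (Fin dA' × Fin dB') × (Fin dA'' × Fin dB'') :=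
  Equiv.prodProdProdComm (Fin dA') (Fin dA'') (Fin dB') (Fin dB'')

namespace STAux

variable {m n p q κ μ : Type*} [Fintype m] [Fintype n] [Fintype p] [Fintype q]
  [Fintype κ] [Fintype μ] [DecidableEq m] [DecidableEq n] [DecidableEq κ] [DecidableEq μ]

/-- inclusion of the left summand -/
def Jl (m n : Type*) [DecidableEq m] [DecidableEq n] : Matrix (m ⊕ n) m ℂ :=
  Matrix.of fun i k => if i = Sum.inl k then 1 else 0

def Jr (m n : Type*) [DecidableEq m] [DecidableEq n] : Matrix (m ⊕ n) n ℂ :=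
  Matrix.of fun i k => if i = Sum.inr k then 1 else 0

lemma Jl_conj_mul_Jl : (Jl m n)ᴴ * (Jl m n) = 1 := by
  ext k k'
  simp [Jl, Matrix.mul_apply, Matrix.conjTranspose_apply, Fintype.sum_sum_type,
    Matrix.one_apply, apply_ite, Finset.sum_ite_eq, eq_comm]

lemma Jr_conj_mul_Jr : (Jr m n)ᴴ * (Jr m n) = 1 := by
  ext k k'
  simp [Jr, Matrix.mul_apply, Matrix.conjTranspose_apply, Fintype.sum_sum_type,
    Matrix.one_apply, apply_ite, Finset.sum_ite_eq, eq_comm]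

lemma Jl_conj_mul_Jr : (Jl m n)ᴴ * (Jr m n) = 0 := by
  ext k k'
  simp [Jl, Jr, Matrix.mul_apply, Matrix.conjTranspose_apply, Fintype.sum_sum_type, apply_ite]

lemma Jr_conj_mul_Jl : (Jr m n)ᴴ * (Jl m n) = 0 := by
  ext k k'
  simp [Jl, Jr, Matrix.mul_apply, Matrix.conjTranspose_apply, Fintype.sum_sum_type, apply_ite]

lemma Jl_mul_Jl_conj_add : (Jl m n) * (Jl m n)ᴴ + (Jr m n) * (Jr m n)ᴴ = 1 := by
  ext i i'
  rcases i with i | i <;> rcases i' with i' | i' <;>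
    simp [Jl, Jr, Matrix.mul_apply, Matrix.conjTranspose_apply, Matrix.one_apply,
      apply_ite, Finset.sum_ite_eq, Sum.inl.injEq, Sum.inr.injEq]

end STAux

namespace STAux2
open STAux
variable {l m n p q κ μ ν : Type*} [Fintype m] [Fintype n] [Fintype p] [Fintype q]
  [Fintype κ] [Fintype μ]

lemma trace_submatrix_equiv (e : m ≃ n) (M : Matrix n n ℂ) :
    (M.submatrix e e).trace = M.trace := by
  simp only [Matrix.trace, Matrix.diag, Matrix.submatrix_apply]
  exact Equiv.sum_comp e fun j => M j j

lemma conjTranspose_kronecker (A : Matrix m n ℂ) (B : Matrix p q ℂ) :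
    (A ⊗ₖ B)ᴴ = Aᴴ ⊗ₖ Bᴴ := by
  ext ⟨i, j⟩ ⟨k, l⟩
  simp [Matrix.conjTranspose_apply, mul_comm]

lemma kronecker_submatrix (A : Matrix m n ℂ) (B : Matrix p q ℂ)
    {m' n' p' q' : Type*} (f1 : m' → m) (f2 : n' → n) (g1 : p' → p) (g2 : q' → q) :
    (A.submatrix f1 f2) ⊗ₖ (B.submatrix g1 g2)
      = (A ⊗ₖ B).submatrix (Prod.map f1 g1) (Prod.map f2 g2) := by
  ext ⟨i, j⟩ ⟨k, l⟩
  rfl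

lemma trace_conj_isometry [DecidableEq n] (W : Matrix m n ℂ) (hW : Wᴴ * W = 1) (X : Matrix n n ℂ) :
    (W * X * Wᴴ).trace = X.trace := by
  rw [Matrix.trace_mul_comm, ← Matrix.mul_assoc, hW, Matrix.one_mul]

lemma conj_isometry_mul [DecidableEq n] (W : Matrix m n ℂ) (hW : Wᴴ * W = 1) (X Y : Matrix n n ℂ) :
    (W * X * Wᴴ) * (W * Y * Wᴴ) = W * (X * Y) * Wᴴ := by
  have : W * X * Wᴴ * (W * Y * Wᴴ) = W * X * (Wᴴ * W) * Y * Wᴴ := by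
    simp only [Matrix.mul_assoc]
  rw [this, hW, Matrix.mul_one, Matrix.mul_assoc W X Y, ← Matrix.mul_assoc]

/-- partial trace over the second factor -/
noncomputable def ptr (T : Matrix (κ × μ) (κ × μ) ℂ) : Matrix κ κ ℂ :=
  Matrix.of fun u v => ∑ w : μ, T (u, w) (v, w)

lemma ptr_add (S T : Matrix (κ × μ) (κ × μ) ℂ) : ptr (S + T) = ptr S + ptr T := by
  ext u v; simp [ptr, Finset.sum_add_distrib]

lemma ptr_smul (c : ℂ) (T : Matrix (κ × μ) (κ × μ) ℂ) : ptr (c • T) = c • ptr T := by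
  ext u v; simp [ptr, Finset.mul_sum]

lemma ptr_kronecker (A : Matrix κ κ ℂ) (B : Matrix μ μ ℂ) :
    ptr (A ⊗ₖ B) = B.trace • A := by
  ext u v
  simp only [ptr, Matrix.trace, Matrix.diag, Matrix.kroneckerMap_apply, Matrix.smul_apply,
    Matrix.of_apply, smul_eq_mul]
  rw [Finset.sum_mul]
  exact Finset.sum_congr rfl fun x _ => mul_comm _ _

lemma trace_ptr (T : Matrix (κ × μ) (κ × μ) ℂ) : (ptr T).trace = T.trace := by
  simp [ptr, Matrix.trace, Matrix.diag, Fintype.sum_prod_type]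

lemma trace_kron_one_mul [DecidableEq μ] (M : Matrix κ κ ℂ) (T : Matrix (κ × μ) (κ × μ) ℂ) :
    ((M ⊗ₖ (1 : Matrix μ μ ℂ)) * T).trace = (M * ptr T).trace := by
  have L : ((M ⊗ₖ (1 : Matrix μ μ ℂ)) * T).trace
      = ∑ u : κ, ∑ w : μ, ∑ v : κ, M u v * T (v, w) (u, w) := by
    simp only [Matrix.trace, Matrix.diag, Matrix.mul_apply, Fintype.sum_prod_type,
      Matrix.kroneckerMap_apply, Matrix.one_apply, ite_mul, one_mul, zero_mul, mul_ite,
      mul_zero]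
    refine Finset.sum_congr rfl fun u _ => Finset.sum_congr rfl fun w _ =>
      Finset.sum_congr rfl fun v _ => ?_
    simp [Finset.sum_ite_eq]
  have R : (M * ptr T).trace = ∑ u : κ, ∑ v : κ, M u v * ∑ w : μ, T (v, w) (u, w) := by
    simp [Matrix.trace, Matrix.diag, Matrix.mul_apply, ptr]
  rw [L, R]
  refine Finset.sum_congr rfl fun u _ => ?_
  rw [Finset.sum_comm]
  simp [Finset.mul_sum]

/-- the "slice" isometry-like inclusion for partial trace -/
noncomputable def Kp [DecidableEq κ] [DecidableEq μ] (w : μ) : Matrix (κ × μ) κ ℂ :=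
  Matrix.of fun p u => if p = (u, w) then 1 else 0

lemma ptr_eq_sum [DecidableEq κ] [DecidableEq μ] (T : Matrix (κ × μ) (κ × μ) ℂ) :
    ptr T = ∑ w : μ, (Kp w : Matrix (κ × μ) κ ℂ)ᴴ * T * (Kp w : Matrix (κ × μ) κ ℂ) := by
  ext u v
  simp only [ptr, Matrix.of_apply, Matrix.sum_apply, Matrix.mul_apply,
    Matrix.conjTranspose_apply, Kp]
  refine Finset.sum_congr rfl fun w _ => ?_
  simp only [apply_ite (star : ℂ → ℂ), star_one, star_zero, ite_mul, one_mul, zero_mul,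
    mul_ite, mul_zero, Finset.sum_ite_eq', Finset.mem_univ, if_true, mul_one]

lemma posSemidef_sum {ι : Type*} (s : Finset ι) (f : ι → Matrix κ κ ℂ)
    (h : ∀ i ∈ s, (f i).PosSemidef) : (∑ i ∈ s, f i).PosSemidef := by
  classical
  induction s using Finset.induction with
  | empty => simpa using Matrix.PosSemidef.zero
  | @insert a s' ha ih =>
    rw [Finset.sum_insert ha]
    exact (h a (Finset.mem_insert_self a s')).add
      (ih fun i hi => h i (Finset.mem_insert_of_mem hi))

lemma ptr_posSemidef [DecidableEq κ] [DecidableEq μ] {T : Matrix (κ × μ) (κ × μ) ℂ}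
    (hT : T.PosSemidef) : (ptr T).PosSemidef := by
  rw [ptr_eq_sum]
  exact posSemidef_sum _ _ fun w _ => hT.conjTranspose_mul_mul_same (Kp w)

lemma pure_extremal {κ : Type*} [Fintype κ] [DecidableEq κ] (ψ : κ → ℂ)
    (hψtr : (vecMulVec ψ (star ψ)).trace = 1)
    {χ0 χ1 : Matrix κ κ ℂ} (h0 : χ0.PosSemidef) (h1 : χ1.PosSemidef)
    (ht0 : χ0.trace = 1)
    {q0 q1 : ℝ} (hq0 : 0 < q0) (hq1 : 0 < q1)
    (hsum : (q0 : ℂ) • χ0 + (q1 : ℂ) • χ1 = vecMulVec ψ (star ψ)) :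
    χ0 = vecMulVec ψ (star ψ) := by
  have hψ' : star ψ ⬝ᵥ ψ = 1 := by
    rw [← hψtr]
    simp [Matrix.trace, Matrix.diag, Matrix.vecMulVec_apply, dotProduct, mul_comm]
  have hkill : ∀ v : κ → ℂ, star ψ ⬝ᵥ v = 0 → χ0 *ᵥ v = 0 := by
    intro v hv
    have hΨv : vecMulVec ψ (star ψ) *ᵥ v = 0 := by
      funext i
      have : (vecMulVec ψ (star ψ) *ᵥ v) i = ψ i * (star ψ ⬝ᵥ v) := by
        simp [Matrix.mulVec, Matrix.vecMulVec_apply, dotProduct, Finset.mul_sum,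
          mul_assoc]
      rw [Pi.zero_apply, this, hv, mul_zero]
    have hq : (q0 : ℂ) • (star v ⬝ᵥ χ0 *ᵥ v) + (q1 : ℂ) • (star v ⬝ᵥ χ1 *ᵥ v) = 0 := by
      have := congrArg (fun M => star v ⬝ᵥ M *ᵥ v) hsum
      simpa [Matrix.add_mulVec, Matrix.smul_mulVec, Complex.real_smul, dotProduct_add, dotProduct_smul,
        hΨv] using this
    have e0 : (0:ℂ) ≤ (q0 : ℂ) • (star v ⬝ᵥ χ0 *ᵥ v) := by
      have := h0.dotProduct_mulVec_nonneg v
      exact smul_nonneg (by exact_mod_cast hq0.le) this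
    have e1 : (0:ℂ) ≤ (q1 : ℂ) • (star v ⬝ᵥ χ1 *ᵥ v) := by
      have := h1.dotProduct_mulVec_nonneg v
      exact smul_nonneg (by exact_mod_cast hq1.le) this
    have hz : (q0 : ℂ) • (star v ⬝ᵥ χ0 *ᵥ v) = 0 :=
      ((add_eq_zero_iff_of_nonneg e0 e1).mp hq).1
    have hq0' : (q0 : ℂ) ≠ 0 := by exact_mod_cast hq0.ne'
    have : star v ⬝ᵥ χ0 *ᵥ v = 0 := by
      rwa [smul_eq_mul, mul_eq_zero, or_iff_right hq0'] at hz
    exact (h0.dotProduct_mulVec_zero_iff v).mp this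
  have hgen : ∀ v : κ → ℂ, χ0 *ᵥ v = (star ψ ⬝ᵥ v) • (χ0 *ᵥ ψ) := by
    intro v
    have horth : star ψ ⬝ᵥ (v - (star ψ ⬝ᵥ v) • ψ) = 0 := by
      rw [dotProduct_sub, dotProduct_smul, hψ', smul_eq_mul, mul_one, sub_self]
    have := hkill _ horth
    rw [Matrix.mulVec_sub, Matrix.mulVec_smul, sub_eq_zero] at this
    exact this
  set u := χ0 *ᵥ ψ with hu_def
  have hχ : χ0 = vecMulVec u (star ψ) := by
    ext i j
    have h := congrFun (hgen (Pi.single j 1)) i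
    rw [Matrix.mulVec_single_one, Matrix.col_apply] at h
    rw [dotProduct_single] at h
    simp only [Pi.smul_apply, smul_eq_mul, mul_one, Pi.star_apply] at h
    rw [Matrix.vecMulVec_apply, h, Pi.star_apply, mul_comm]
  have htr : ∑ i : κ, u i * star (ψ i) = 1 := by
    rw [← ht0, hχ]
    simp [Matrix.trace, Matrix.diag, Matrix.vecMulVec_apply]
  have hherm : ∀ i j, u i * star (ψ j) = ψ i * star (u j) := by
    intro i j
    have h1' : star (χ0 j i) = χ0 i j := congrFun (congrFun h0.1.eq i) j
    rw [hχ] at h1'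
    simp only [Matrix.vecMulVec_apply, Pi.star_apply, StarMul.star_mul, star_star] at h1'
    rw [← h1']
  have hu : u = ψ := by
    funext i
    have c1 : (∑ j : κ, star (ψ j) * ψ j) = 1 := by
      rw [← hψ']; rfl
    have c2 : (∑ j : κ, star (u j) * ψ j) = 1 := by
      have : (∑ j : κ, star (u j) * ψ j) = star (∑ j : κ, u j * star (ψ j)) := by
        rw [star_sum]; exact Finset.sum_congr rfl fun j _ => by simp [mul_comm]
      rw [this, htr, star_one]
    calc u i = u i * ∑ j : κ, star (ψ j) * ψ j := by rw [c1, mul_one]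
      _ = ∑ j : κ, (u i * star (ψ j)) * ψ j := by
          rw [Finset.mul_sum]; exact Finset.sum_congr rfl fun j _ => by ring
      _ = ∑ j : κ, (ψ i * star (u j)) * ψ j := by
          exact Finset.sum_congr rfl fun j _ => by rw [hherm i j]
      _ = ψ i * ∑ j : κ, star (u j) * ψ j := by
          rw [Finset.mul_sum]; exact Finset.sum_congr rfl fun j _ => by ring
      _ = ψ i := by rw [c2, mul_one]
  rw [hχ, hu]

lemma posSemidef_real_smul {κ : Type*} [Fintype κ] {q : ℝ} (hq : 0 ≤ q)
    {A : Matrix κ κ ℂ} (hA : A.PosSemidef) : ((q : ℂ) • A).PosSemidef := by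
  refine .of_dotProduct_mulVec_nonneg ?_ ?_
  · have : ((q : ℂ) • A)ᴴ = star (q : ℂ) • Aᴴ := Matrix.conjTranspose_smul _ _
    rw [Matrix.IsHermitian, this, Complex.star_def, Complex.conj_ofReal, hA.1.eq]
  · intro x
    rw [Matrix.smul_mulVec, dotProduct_smul, smul_eq_mul]
    exact mul_nonneg (by exact_mod_cast hq) (hA.dotProduct_mulVec_nonneg x)

lemma conj_inner {m n p : Type*} [Fintype m] [Fintype n] [Fintype p]
    (J : Matrix m n ℂ) (K : Matrix m p ℂ) (X : Matrix p p ℂ) :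
    Jᴴ * (K * X * Kᴴ) * J = (Jᴴ * K) * X * (Jᴴ * K)ᴴ := by
  rw [Matrix.conjTranspose_mul, Matrix.conjTranspose_conjTranspose]
  simp only [Matrix.mul_assoc]

lemma submatrix_add' {m n l o : Type*} (A B : Matrix m n ℂ) (f : l → m) (g : o → n) :
    (A + B).submatrix f g = A.submatrix f g + B.submatrix f g := rfl

lemma submatrix_smul' {m n l o : Type*} (c : ℂ) (A : Matrix m n ℂ) (f : l → m) (g : o → n) :
    (c • A).submatrix f g = c • A.submatrix f g := rfl

lemma submatrix_finsum {ι m n l o : Type*} (s : Finset ι) (f : ι → Matrix m n ℂ)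
    (g1 : l → m) (g2 : o → n) :
    (∑ i ∈ s, f i).submatrix g1 g2 = ∑ i ∈ s, (f i).submatrix g1 g2 := by
  ext i j; simp [Matrix.sum_apply]

end STAux2

section Branch
open STAux STAux2

set_option maxHeartbeats 2000000 in
lemma branch_eq
    (P : Behaviour)
    (dA' dB' : ℕ)
    (ψ : Fin dA' × Fin dB' → ℂ)
    (Pm : Fin 2 → Fin 2 → Matrix (Fin dA') (Fin dA') ℂ)
    (Qm : Fin 2 → Fin 2 → Matrix (Fin dB') (Fin dB') ℂ)
    (hcanon : Realises dA' dB' (Matrix.vecMulVec ψ (star ψ)) Pm Qm P)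
    (hselftest : ∀ (dA dB : ℕ) (ρ : Matrix (Fin dA × Fin dB) (Fin dA × Fin dB) ℂ)
      (E : Fin 2 → Fin 2 → Matrix (Fin dA) (Fin dA) ℂ)
      (F : Fin 2 → Fin 2 → Matrix (Fin dB) (Fin dB) ℂ),
      Realises dA dB ρ E F P →
      ∃ (dA'' dB'' : ℕ)
        (VA : Matrix (Fin dA' × Fin dA'') (Fin dA) ℂ)
        (VB : Matrix (Fin dB' × Fin dB'') (Fin dB) ℂ)
        (σ : Matrix (Fin dA'' × Fin dB'') (Fin dA'' × Fin dB'') ℂ),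
        VAᴴ * VA = 1 ∧ VBᴴ * VB = 1 ∧ σ.PosSemidef ∧ σ.trace = 1 ∧
        ∀ a b x y,
          Matrix.reindex (reorder dA' dA'' dB' dB'') (reorder dA' dA'' dB' dB'')
              ((VA ⊗ₖ VB) * ((E x a ⊗ₖ F y b) * ρ) * (VA ⊗ₖ VB)ᴴ)
            = ((Pm x a ⊗ₖ Qm y b) * Matrix.vecMulVec ψ (star ψ)) ⊗ₖ σ)
    (q0 q1 : ℝ) (hq0 : 0 < q0) (hq1 : 0 < q1) (hqsum : q0 + q1 = 1)
    (P0 P1 : Behaviour) (hP0 : P0 ∈ Qfinite) (hP1 : P1 ∈ Qfinite)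
    (hmix : ∀ a b x y, P a b x y = q0 * P0 a b x y + q1 * P1 a b x y) :
    P0 = P := by
  classical
  obtain ⟨dA0, dB0, hdA0, hdB0, ρ0, E0, F0, hreal0⟩ := hP0
  obtain ⟨dA1, dB1, hdA1, hdB1, ρ1, E1, F1, hreal1⟩ := hP1
  obtain ⟨hρ0psd, hρ0tr, hE0psd, hF0psd, hE0sum, hF0sum, hP0eq⟩ := hreal0
  obtain ⟨hρ1psd, hρ1tr, hE1psd, hF1psd, hE1sum, hF1sum, hP1eq⟩ := hreal1
  obtain ⟨hΨpsd, hΨtr, hPmpsd, hQmpsd, hPmsum, hQmsum, hPeq⟩ := hcanon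
  -- the direct sum realisation
  let JA : Matrix (Fin dA0 ⊕ Fin dA1) (Fin dA0) ℂ := Jl (Fin dA0) (Fin dA1)
  let JA' : Matrix (Fin dA0 ⊕ Fin dA1) (Fin dA1) ℂ := Jr (Fin dA0) (Fin dA1)
  let JB : Matrix (Fin dB0 ⊕ Fin dB1) (Fin dB0) ℂ := Jl (Fin dB0) (Fin dB1)
  let JB' : Matrix (Fin dB0 ⊕ Fin dB1) (Fin dB1) ℂ := Jr (Fin dB0) (Fin dB1)
  have hJA1 : JAᴴ * JA = 1 := Jl_conj_mul_Jl
  have hJA1' : JA'ᴴ * JA' = 1 := Jr_conj_mul_Jr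
  have hJB1 : JBᴴ * JB = 1 := Jl_conj_mul_Jl
  have hJB1' : JB'ᴴ * JB' = 1 := Jr_conj_mul_Jr
  have hJA0 : JAᴴ * JA' = 0 := Jl_conj_mul_Jr
  have hJA0' : JA'ᴴ * JA = 0 := Jr_conj_mul_Jl
  have hJB0 : JBᴴ * JB' = 0 := Jl_conj_mul_Jr
  have hJB0' : JB'ᴴ * JB = 0 := Jr_conj_mul_Jl
  have hJAfull : JA * JAᴴ + JA' * JA'ᴴ = 1 := Jl_mul_Jl_conj_add
  let E' : Fin 2 → Fin 2 → Matrix (Fin dA0 ⊕ Fin dA1) (Fin dA0 ⊕ Fin dA1) ℂ := fun x a =>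
    JA * E0 x a * JAᴴ + JA' * E1 x a * JA'ᴴ
  let F' : Fin 2 → Fin 2 → Matrix (Fin dB0 ⊕ Fin dB1) (Fin dB0 ⊕ Fin dB1) ℂ := fun y b =>
    JB * F0 y b * JBᴴ + JB' * F1 y b * JB'ᴴ
  let W0 : Matrix ((Fin dA0 ⊕ Fin dA1) × (Fin dB0 ⊕ Fin dB1)) (Fin dA0 × Fin dB0) ℂ := JA ⊗ₖ JB
  let W1 : Matrix ((Fin dA0 ⊕ Fin dA1) × (Fin dB0 ⊕ Fin dB1)) (Fin dA1 × Fin dB1) ℂ := JA' ⊗ₖ JB'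
  have hW0iso : W0ᴴ * W0 = 1 := by
    show (JA ⊗ₖ JB)ᴴ * (JA ⊗ₖ JB) = 1
    rw [STAux2.conjTranspose_kronecker, ← Matrix.mul_kronecker_mul, hJA1, hJB1,
      Matrix.one_kronecker_one]
  have hW1iso : W1ᴴ * W1 = 1 := by
    show (JA' ⊗ₖ JB')ᴴ * (JA' ⊗ₖ JB') = 1
    rw [STAux2.conjTranspose_kronecker, ← Matrix.mul_kronecker_mul, hJA1', hJB1',
      Matrix.one_kronecker_one]
  let ρt0 := W0 * ρ0 * W0ᴴ
  let ρt1 := W1 * ρ1 * W1ᴴ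
  let ρ' := (q0 : ℂ) • ρt0 + (q1 : ℂ) • ρt1
  -- sandwich identities
  have hE'0 : ∀ x a, JAᴴ * E' x a * JA = E0 x a := by
    intro x a
    show JAᴴ * (JA * E0 x a * JAᴴ + JA' * E1 x a * JA'ᴴ) * JA = E0 x a
    rw [Matrix.mul_add, Matrix.add_mul, conj_inner JA JA, conj_inner JA JA', hJA1, hJA0]
    simp
  have hE'1 : ∀ x a, JA'ᴴ * E' x a * JA' = E1 x a := by
    intro x a
    show JA'ᴴ * (JA * E0 x a * JAᴴ + JA' * E1 x a * JA'ᴴ) * JA' = E1 x a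
    rw [Matrix.mul_add, Matrix.add_mul, conj_inner JA' JA, conj_inner JA' JA', hJA1', hJA0']
    simp
  have hF'0 : ∀ y b, JBᴴ * F' y b * JB = F0 y b := by
    intro y b
    show JBᴴ * (JB * F0 y b * JBᴴ + JB' * F1 y b * JB'ᴴ) * JB = F0 y b
    rw [Matrix.mul_add, Matrix.add_mul, conj_inner JB JB, conj_inner JB JB', hJB1, hJB0]
    simp
  have hF'1 : ∀ y b, JB'ᴴ * F' y b * JB' = F1 y b := by
    intro y b
    show JB'ᴴ * (JB * F0 y b * JBᴴ + JB' * F1 y b * JB'ᴴ) * JB' = F1 y b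
    rw [Matrix.mul_add, Matrix.add_mul, conj_inner JB' JB, conj_inner JB' JB', hJB1', hJB0']
    simp
  have hW0EF : ∀ x a y b, W0ᴴ * (E' x a ⊗ₖ F' y b) * W0 = E0 x a ⊗ₖ F0 y b := by
    intro x a y b
    show (JA ⊗ₖ JB)ᴴ * (E' x a ⊗ₖ F' y b) * (JA ⊗ₖ JB) = E0 x a ⊗ₖ F0 y b
    rw [STAux2.conjTranspose_kronecker, ← Matrix.mul_kronecker_mul, ← Matrix.mul_kronecker_mul,
      hE'0, hF'0]
  have hW1EF : ∀ x a y b, W1ᴴ * (E' x a ⊗ₖ F' y b) * W1 = E1 x a ⊗ₖ F1 y b := by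
    intro x a y b
    show (JA' ⊗ₖ JB')ᴴ * (E' x a ⊗ₖ F' y b) * (JA' ⊗ₖ JB') = E1 x a ⊗ₖ F1 y b
    rw [STAux2.conjTranspose_kronecker, ← Matrix.mul_kronecker_mul, ← Matrix.mul_kronecker_mul,
      hE'1, hF'1]
  -- traces against the embedded states
  have htr0 : ∀ a b x y, ((E' x a ⊗ₖ F' y b) * ρt0).trace = (P0 a b x y : ℂ) := by
    intro a b x y
    have h1 : (E' x a ⊗ₖ F' y b) * ρt0 = (E' x a ⊗ₖ F' y b) * W0 * ρ0 * W0ᴴ := by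
      show _ = _
      simp only [ρt0, Matrix.mul_assoc]
    rw [h1, Matrix.trace_mul_comm, ← Matrix.mul_assoc, ← Matrix.mul_assoc, hW0EF, ← hP0eq]
  have htr1 : ∀ a b x y, ((E' x a ⊗ₖ F' y b) * ρt1).trace = (P1 a b x y : ℂ) := by
    intro a b x y
    have h1 : (E' x a ⊗ₖ F' y b) * ρt1 = (E' x a ⊗ₖ F' y b) * W1 * ρ1 * W1ᴴ := by
      show _ = _
      simp only [ρt1, Matrix.mul_assoc]
    rw [h1, Matrix.trace_mul_comm, ← Matrix.mul_assoc, ← Matrix.mul_assoc, hW1EF, ← hP1eq]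
  -- transport to `Fin (dA0 + dA1)`
  let eA : (Fin dA0 ⊕ Fin dA1) ≃ Fin (dA0 + dA1) := finSumFinEquiv
  let eB : (Fin dB0 ⊕ Fin dB1) ≃ Fin (dB0 + dB1) := finSumFinEquiv
  let eP : ((Fin dA0 ⊕ Fin dA1) × (Fin dB0 ⊕ Fin dB1)) ≃ (Fin (dA0 + dA1) × Fin (dB0 + dB1)) :=
    eA.prodCongr eB
  have hcoe : (Prod.map (⇑eA.symm) (⇑eB.symm)) = ⇑eP.symm := by
    funext p
    cases p
    simp [eP]
  let E : Fin 2 → Fin 2 → Matrix (Fin (dA0 + dA1)) (Fin (dA0 + dA1)) ℂ := fun x a =>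
    (E' x a).submatrix ⇑eA.symm ⇑eA.symm
  let F : Fin 2 → Fin 2 → Matrix (Fin (dB0 + dB1)) (Fin (dB0 + dB1)) ℂ := fun y b =>
    (F' y b).submatrix ⇑eB.symm ⇑eB.symm
  let ρ : Matrix (Fin (dA0 + dA1) × Fin (dB0 + dB1)) (Fin (dA0 + dA1) × Fin (dB0 + dB1)) ℂ :=
    ρ'.submatrix ⇑eP.symm ⇑eP.symm
  have hEFkron : ∀ a b x y,
      E x a ⊗ₖ F y b = (E' x a ⊗ₖ F' y b).submatrix ⇑eP.symm ⇑eP.symm := by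
    intro a b x y
    show (E' x a).submatrix ⇑eA.symm ⇑eA.symm ⊗ₖ (F' y b).submatrix ⇑eB.symm ⇑eB.symm = _
    rw [kronecker_submatrix, hcoe]
  -- `Realises` for the direct sum
  have hρ'psd : ρ'.PosSemidef :=
    (posSemidef_real_smul hq0.le (hρ0psd.mul_mul_conjTranspose_same W0)).add
      (posSemidef_real_smul hq1.le (hρ1psd.mul_mul_conjTranspose_same W1))
  have ht0 : ρt0.trace = 1 := by
    rw [show ρt0.trace = ρ0.trace from trace_conj_isometry W0 hW0iso ρ0, hρ0tr]
  have ht1 : ρt1.trace = 1 := by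
    rw [show ρt1.trace = ρ1.trace from trace_conj_isometry W1 hW1iso ρ1, hρ1tr]
  have hρ'tr : ρ'.trace = 1 := by
    show ((q0 : ℂ) • ρt0 + (q1 : ℂ) • ρt1).trace = 1
    rw [Matrix.trace_add, Matrix.trace_smul, Matrix.trace_smul, ht0, ht1, smul_eq_mul,
      smul_eq_mul, mul_one, mul_one]
    exact_mod_cast hqsum
  have hEsum : ∀ x, ∑ a : Fin 2, E x a = 1 := by
    intro x
    show ∑ a : Fin 2, (E' x a).submatrix ⇑eA.symm ⇑eA.symm = 1
    rw [← submatrix_finsum]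
    have : ∑ a : Fin 2, E' x a = 1 := by
      show ∑ a : Fin 2, (JA * E0 x a * JAᴴ + JA' * E1 x a * JA'ᴴ) = 1
      rw [Fin.sum_univ_two]
      have e0 := hE0sum x
      have e1 := hE1sum x
      rw [Fin.sum_univ_two] at e0 e1
      calc JA * E0 x 0 * JAᴴ + JA' * E1 x 0 * JA'ᴴ + (JA * E0 x 1 * JAᴴ + JA' * E1 x 1 * JA'ᴴ)
          = JA * (E0 x 0 + E0 x 1) * JAᴴ + JA' * (E1 x 0 + E1 x 1) * JA'ᴴ := by
            rw [Matrix.mul_add, Matrix.add_mul, Matrix.mul_add, Matrix.add_mul]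
            abel
        _ = JA * JAᴴ + JA' * JA'ᴴ := by rw [e0, e1, Matrix.mul_one, Matrix.mul_one]
        _ = 1 := hJAfull
    rw [this, Matrix.submatrix_one_equiv]
  have hFsum : ∀ y, ∑ b : Fin 2, F y b = 1 := by
    intro y
    show ∑ b : Fin 2, (F' y b).submatrix ⇑eB.symm ⇑eB.symm = 1
    rw [← submatrix_finsum]
    have : ∑ b : Fin 2, F' y b = 1 := by
      show ∑ b : Fin 2, (JB * F0 y b * JBᴴ + JB' * F1 y b * JB'ᴴ) = 1
      rw [Fin.sum_univ_two]
      have e0 := hF0sum y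
      have e1 := hF1sum y
      rw [Fin.sum_univ_two] at e0 e1
      calc JB * F0 y 0 * JBᴴ + JB' * F1 y 0 * JB'ᴴ + (JB * F0 y 1 * JBᴴ + JB' * F1 y 1 * JB'ᴴ)
          = JB * (F0 y 0 + F0 y 1) * JBᴴ + JB' * (F1 y 0 + F1 y 1) * JB'ᴴ := by
            rw [Matrix.mul_add, Matrix.add_mul, Matrix.mul_add, Matrix.add_mul]
            abel
        _ = JB * JBᴴ + JB' * JB'ᴴ := by rw [e0, e1, Matrix.mul_one, Matrix.mul_one]
        _ = 1 := Jl_mul_Jl_conj_add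
    rw [this, Matrix.submatrix_one_equiv]
  have hmul' : ∀ a b x y, (E x a ⊗ₖ F y b) * ρ
      = ((E' x a ⊗ₖ F' y b) * ρ').submatrix ⇑eP.symm ⇑eP.symm := by
    intro a b x y
    rw [hEFkron]
    exact Matrix.submatrix_mul_equiv _ _ _ _ _
  have htrρ' : ∀ a b x y, ((E' x a ⊗ₖ F' y b) * ρ').trace = (P a b x y : ℂ) := by
    intro a b x y
    show ((E' x a ⊗ₖ F' y b) * ((q0 : ℂ) • ρt0 + (q1 : ℂ) • ρt1)).trace = _
    rw [Matrix.mul_add, Matrix.mul_smul, Matrix.mul_smul, Matrix.trace_add,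
      Matrix.trace_smul, Matrix.trace_smul, htr0, htr1, smul_eq_mul, smul_eq_mul, hmix]
    push_cast
    ring
  have hrealP : Realises (dA0 + dA1) (dB0 + dB1) ρ E F P := by
    refine ⟨hρ'psd.submatrix _, ?_, ?_, ?_, hEsum, hFsum, ?_⟩
    · rw [show ρ.trace = ρ'.trace from trace_submatrix_equiv eP.symm ρ', hρ'tr]
    · intro x a
      exact (((hE0psd x a).mul_mul_conjTranspose_same JA).add
        ((hE1psd x a).mul_mul_conjTranspose_same JA')).submatrix _
    · intro y b
      exact (((hF0psd y b).mul_mul_conjTranspose_same JB).add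
        ((hF1psd y b).mul_mul_conjTranspose_same JB')).submatrix _
    · intro a b x y
      rw [hmul', show (((E' x a ⊗ₖ F' y b) * ρ').submatrix ⇑eP.symm ⇑eP.symm).trace
        = ((E' x a ⊗ₖ F' y b) * ρ').trace from trace_submatrix_equiv eP.symm _, htrρ']
  -- apply the self-testing hypothesis
  obtain ⟨dA'', dB'', VA, VB, σ, hVA, hVB, hσpsd, hσtr, hkey⟩ :=
    hselftest (dA0 + dA1) (dB0 + dB1) ρ E F hrealP
  set e : (Fin dA' × Fin dA'') × (Fin dB' × Fin dB'') ≃ (Fin dA' × Fin dB') × (Fin dA'' × Fin dB'')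
    := reorder dA' dA'' dB' dB'' with he
  let W := VA ⊗ₖ VB
  have hWiso : Wᴴ * W = 1 := by
    show (VA ⊗ₖ VB)ᴴ * (VA ⊗ₖ VB) = 1
    rw [STAux2.conjTranspose_kronecker, ← Matrix.mul_kronecker_mul, hVA, hVB, Matrix.one_kronecker_one]
  let Ψ := Matrix.vecMulVec ψ (star ψ)
  have hkey' : ∀ a b x y, (W * ((E x a ⊗ₖ F y b) * ρ) * Wᴴ).submatrix ⇑e.symm ⇑e.symm
      = ((Pm x a ⊗ₖ Qm y b) * Ψ) ⊗ₖ σ := by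
    intro a b x y
    have h := hkey a b x y
    rwa [Matrix.reindex_apply] at h
  -- summing the self-testing identity over outcomes
  have hsum1 : (E 0 0 ⊗ₖ F 0 0) + (E 0 0 ⊗ₖ F 0 1) + (E 0 1 ⊗ₖ F 0 0) + (E 0 1 ⊗ₖ F 0 1)
      = (1 : Matrix (Fin (dA0 + dA1) × Fin (dB0 + dB1)) (Fin (dA0 + dA1) × Fin (dB0 + dB1)) ℂ) := by
    have eA2 := hEsum 0
    have eB2 := hFsum 0
    rw [Fin.sum_univ_two] at eA2 eB2
    calc (E 0 0 ⊗ₖ F 0 0) + (E 0 0 ⊗ₖ F 0 1) + (E 0 1 ⊗ₖ F 0 0) + (E 0 1 ⊗ₖ F 0 1)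
        = (E 0 0 + E 0 1) ⊗ₖ (F 0 0 + F 0 1) := by
          rw [Matrix.add_kronecker, Matrix.kronecker_add, Matrix.kronecker_add]
          abel
      _ = 1 := by rw [eA2, eB2, Matrix.one_kronecker_one]
  have hPQsum : (Pm 0 0 ⊗ₖ Qm 0 0) + (Pm 0 0 ⊗ₖ Qm 0 1) + (Pm 0 1 ⊗ₖ Qm 0 0) + (Pm 0 1 ⊗ₖ Qm 0 1)
      = (1 : Matrix (Fin dA' × Fin dB') (Fin dA' × Fin dB') ℂ) := by
    have eA2 := hPmsum 0
    have eB2 := hQmsum 0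
    rw [Fin.sum_univ_two] at eA2 eB2
    calc (Pm 0 0 ⊗ₖ Qm 0 0) + (Pm 0 0 ⊗ₖ Qm 0 1) + (Pm 0 1 ⊗ₖ Qm 0 0) + (Pm 0 1 ⊗ₖ Qm 0 1)
        = (Pm 0 0 + Pm 0 1) ⊗ₖ (Qm 0 0 + Qm 0 1) := by
          rw [Matrix.add_kronecker, Matrix.kronecker_add, Matrix.kronecker_add]
          abel
      _ = 1 := by rw [eA2, eB2, Matrix.one_kronecker_one]
  have hWρ : (W * ρ * Wᴴ).submatrix ⇑e.symm ⇑e.symm = Ψ ⊗ₖ σ := by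
    have expand : W * ρ * Wᴴ
        = W * ((E 0 0 ⊗ₖ F 0 0) * ρ) * Wᴴ + W * ((E 0 0 ⊗ₖ F 0 1) * ρ) * Wᴴ
          + W * ((E 0 1 ⊗ₖ F 0 0) * ρ) * Wᴴ + W * ((E 0 1 ⊗ₖ F 0 1) * ρ) * Wᴴ := by
      have h1 : ((E 0 0 ⊗ₖ F 0 0) + (E 0 0 ⊗ₖ F 0 1) + (E 0 1 ⊗ₖ F 0 0) + (E 0 1 ⊗ₖ F 0 1)) * ρ
          = ρ := by rw [hsum1, Matrix.one_mul]
      calc W * ρ * Wᴴ = W * (((E 0 0 ⊗ₖ F 0 0) + (E 0 0 ⊗ₖ F 0 1) + (E 0 1 ⊗ₖ F 0 0)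
            + (E 0 1 ⊗ₖ F 0 1)) * ρ) * Wᴴ := by rw [h1]
        _ = _ := by simp only [Matrix.add_mul, Matrix.mul_add]
    rw [expand, submatrix_add', submatrix_add', submatrix_add',
      hkey' 0 0 0 0, hkey' 0 1 0 0, hkey' 1 0 0 0, hkey' 1 1 0 0,
      ← Matrix.add_kronecker, ← Matrix.add_kronecker, ← Matrix.add_kronecker,
      ← Matrix.add_mul, ← Matrix.add_mul, ← Matrix.add_mul, hPQsum, Matrix.one_mul]
  -- the branch projector
  let Prj : Matrix ((Fin dA0 ⊕ Fin dA1) × (Fin dB0 ⊕ Fin dB1))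
      ((Fin dA0 ⊕ Fin dA1) × (Fin dB0 ⊕ Fin dB1)) ℂ :=
    (JA * JAᴴ) ⊗ₖ (1 : Matrix (Fin dB0 ⊕ Fin dB1) (Fin dB0 ⊕ Fin dB1) ℂ)
  let Prjf := Prj.submatrix ⇑eP.symm ⇑eP.symm
  have key0 : W0ᴴ * Prj = W0ᴴ := by
    show (JA ⊗ₖ JB)ᴴ * ((JA * JAᴴ) ⊗ₖ (1 : Matrix (Fin dB0 ⊕ Fin dB1) (Fin dB0 ⊕ Fin dB1) ℂ))
        = (JA ⊗ₖ JB)ᴴ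
    rw [STAux2.conjTranspose_kronecker, ← Matrix.mul_kronecker_mul, ← Matrix.mul_assoc, hJA1,
      Matrix.one_mul, Matrix.mul_one]
  have key1 : W1ᴴ * Prj = 0 := by
    show (JA' ⊗ₖ JB')ᴴ * ((JA * JAᴴ) ⊗ₖ (1 : Matrix (Fin dB0 ⊕ Fin dB1) (Fin dB0 ⊕ Fin dB1) ℂ))
        = 0
    rw [STAux2.conjTranspose_kronecker, ← Matrix.mul_kronecker_mul, ← Matrix.mul_assoc, hJA0',
      Matrix.zero_mul, Matrix.zero_kronecker]
  have hrhoPj : ρ' * Prj = (q0 : ℂ) • ρt0 := by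
    have a0 : ρt0 * Prj = ρt0 := by
      show W0 * ρ0 * W0ᴴ * Prj = W0 * ρ0 * W0ᴴ
      rw [Matrix.mul_assoc (W0 * ρ0) W0ᴴ Prj, key0]
    have a1 : ρt1 * Prj = 0 := by
      show W1 * ρ1 * W1ᴴ * Prj = 0
      rw [Matrix.mul_assoc (W1 * ρ1) W1ᴴ Prj, key1, Matrix.mul_zero]
    show ((q0 : ℂ) • ρt0 + (q1 : ℂ) • ρt1) * Prj = (q0 : ℂ) • ρt0
    rw [Matrix.add_mul, Matrix.smul_mul, Matrix.smul_mul, a0, a1, smul_zero, add_zero]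
  let ρf0 := ρt0.submatrix ⇑eP.symm ⇑eP.symm
  let ρf1 := ρt1.submatrix ⇑eP.symm ⇑eP.symm
  have hρPrjf : ρ * Prjf = (q0 : ℂ) • ρf0 := by
    show ρ'.submatrix ⇑eP.symm ⇑eP.symm * Prj.submatrix ⇑eP.symm ⇑eP.symm = _
    rw [Matrix.submatrix_mul_equiv ρ' Prj _ eP.symm _, hrhoPj, submatrix_smul']
  let T0 := (W * ρf0 * Wᴴ).submatrix ⇑e.symm ⇑e.symm
  let T1 := (W * ρf1 * Wᴴ).submatrix ⇑e.symm ⇑e.symm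
  let R := (W * Prjf * Wᴴ).submatrix ⇑e.symm ⇑e.symm
  have hρsplit : ρ = (q0 : ℂ) • ρf0 + (q1 : ℂ) • ρf1 := by
    show ((q0 : ℂ) • ρt0 + (q1 : ℂ) • ρt1).submatrix ⇑eP.symm ⇑eP.symm = _
    rw [submatrix_add', submatrix_smul', submatrix_smul']
  have hT01 : (q0 : ℂ) • T0 + (q1 : ℂ) • T1 = Ψ ⊗ₖ σ := by
    rw [← hWρ, hρsplit]
    have h2 : W * ((q0 : ℂ) • ρf0 + (q1 : ℂ) • ρf1) * Wᴴ
        = (q0 : ℂ) • (W * ρf0 * Wᴴ) + (q1 : ℂ) • (W * ρf1 * Wᴴ) := by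
      rw [Matrix.mul_add, Matrix.add_mul, Matrix.mul_smul, Matrix.smul_mul, Matrix.mul_smul,
        Matrix.smul_mul]
    rw [h2, submatrix_add', submatrix_smul', submatrix_smul']
  have hQR : (Ψ ⊗ₖ σ) * R = (q0 : ℂ) • T0 := by
    rw [← hWρ]
    show (W * ρ * Wᴴ).submatrix ⇑e.symm ⇑e.symm * (W * Prjf * Wᴴ).submatrix ⇑e.symm ⇑e.symm = _
    rw [Matrix.submatrix_mul_equiv _ _ _ e.symm _, conj_isometry_mul W hWiso, hρPrjf]
    have h2 : W * ((q0 : ℂ) • ρf0) * Wᴴ = (q0 : ℂ) • (W * ρf0 * Wᴴ) := by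
      rw [Matrix.mul_smul, Matrix.smul_mul]
    rw [h2, submatrix_smul']
  -- partial traces
  have hT0psd : T0.PosSemidef :=
    (((hρ0psd.mul_mul_conjTranspose_same W0).submatrix _).mul_mul_conjTranspose_same W).submatrix _
  have hT1psd : T1.PosSemidef :=
    (((hρ1psd.mul_mul_conjTranspose_same W1).submatrix _).mul_mul_conjTranspose_same W).submatrix _
  have hT0tr : T0.trace = 1 := by
    show ((W * ρf0 * Wᴴ).submatrix ⇑e.symm ⇑e.symm).trace = 1
    rw [trace_submatrix_equiv e.symm, trace_conj_isometry W hWiso,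
      show ρf0.trace = ρt0.trace from trace_submatrix_equiv eP.symm ρt0, ht0]
  have hχsum : (q0 : ℂ) • ptr T0 + (q1 : ℂ) • ptr T1 = Ψ := by
    have h2 := congrArg ptr hT01
    rwa [ptr_add, ptr_smul, ptr_smul, ptr_kronecker, hσtr, one_smul] at h2
  have hχ0 : ptr T0 = Ψ :=
    pure_extremal ψ hΨtr (ptr_posSemidef hT0psd) (ptr_posSemidef hT1psd)
      (by rw [trace_ptr]; exact hT0tr) hq0 hq1 hχsum
  -- conclusion
  funext a b x y
  have main : (q0 : ℂ) * (P0 a b x y : ℂ) = (q0 : ℂ) * (P a b x y : ℂ) := by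
    calc (q0 : ℂ) * (P0 a b x y : ℂ)
        = ((E x a ⊗ₖ F y b) * (ρ * Prjf)).trace := by
          rw [hρPrjf, Matrix.mul_smul, Matrix.trace_smul, smul_eq_mul]
          congr 1
          rw [hEFkron, Matrix.submatrix_mul_equiv _ _ _ eP.symm _,
            trace_submatrix_equiv eP.symm, htr0]
      _ = ((W * ((E x a ⊗ₖ F y b) * ρ) * Wᴴ) * (W * Prjf * Wᴴ)).trace := by
          rw [conj_isometry_mul W hWiso, trace_conj_isometry W hWiso]
          simp only [Matrix.mul_assoc]
      _ = ((((Pm x a ⊗ₖ Qm y b) * Ψ) ⊗ₖ σ) * R).trace := by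
          rw [← trace_submatrix_equiv e.symm
              (W * ((E x a ⊗ₖ F y b) * ρ) * Wᴴ * (W * Prjf * Wᴴ)),
            ← Matrix.submatrix_mul_equiv _ _ _ e.symm _, hkey' a b x y]
      _ = (((Pm x a ⊗ₖ Qm y b) ⊗ₖ (1 : Matrix (Fin dA'' × Fin dB'') (Fin dA'' × Fin dB'') ℂ))
            * ((q0 : ℂ) • T0)).trace := by
          rw [← hQR, ← Matrix.mul_assoc]
          congr 2
          rw [show ((Pm x a ⊗ₖ Qm y b) * Ψ) ⊗ₖ σ = ((Pm x a ⊗ₖ Qm y b) * Ψ)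
              ⊗ₖ ((1 : Matrix (Fin dA'' × Fin dB'') (Fin dA'' × Fin dB'') ℂ) * σ) from by
            rw [Matrix.one_mul], Matrix.mul_kronecker_mul]
      _ = (q0 : ℂ) * ((Pm x a ⊗ₖ Qm y b) * ptr T0).trace := by
          rw [Matrix.mul_smul, Matrix.trace_smul, smul_eq_mul, trace_kron_one_mul]
      _ = (q0 : ℂ) * (P a b x y : ℂ) := by rw [hχ0, ← hPeq]
  have hq0c : (q0 : ℂ) ≠ 0 := by exact_mod_cast hq0.ne'
  have := mul_left_cancel₀ hq0c main
  exact_mod_cast this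
end Branch


/-- **Self-testing implies extremality (Proposition 1).**
Suppose `P ∈ Q_finite` self-tests the canonical realisation
`(H_{A'}, H_{B'}, Ψ, {P^x_a}, {Q^y_b})`, where `Ψ = |ψ⟩⟨ψ|` is a pure state whose
reduced states are full-rank and the measurements are projective: for every
finite-dimensional realisation `(ρ, E, F)` of `P` there are isometries
`V_A, V_B` and an auxiliary state `σ` with
`(V_A ⊗ V_B)[(E^x_a ⊗ F^y_b)ρ](V_A ⊗ V_B)† = [(P^x_a ⊗ Q^y_b)Ψ] ⊗ σ`
(after the natural reordering of tensor factors).  Then `P` is an extremal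
point of `Q_finite`. -/
theorem self_testing_implies_extremal
    (P : Behaviour) (hP : P ∈ Qfinite)
    (dA' dB' : ℕ) (hdA' : 0 < dA') (hdB' : 0 < dB')
    (ψ : Fin dA' × Fin dB' → ℂ)
    (Pm : Fin 2 → Fin 2 → Matrix (Fin dA') (Fin dA') ℂ)
    (Qm : Fin 2 → Fin 2 → Matrix (Fin dB') (Fin dB') ℂ)
    -- the canonical state is the pure state `Ψ = |ψ⟩⟨ψ|`:
    (hPmProj : ∀ x a, (Pm x a).IsHermitian ∧ Pm x a * Pm x a = Pm x a)
    (hQmProj : ∀ y b, (Qm y b).IsHermitian ∧ Qm y b * Qm y b = Qm y b)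
    -- the canonical realisation realises `P`:
    (hcanon : Realises dA' dB' (Matrix.vecMulVec ψ (star ψ)) Pm Qm P)
    -- the reduced states of `Ψ` are full-rank:
    (hfullA : (reducedA (Matrix.vecMulVec ψ (star ψ))).rank = dA')
    (hfullB : (reducedB (Matrix.vecMulVec ψ (star ψ))).rank = dB')
    -- the self-testing hypothesis:
    (hselftest : ∀ (dA dB : ℕ) (ρ : Matrix (Fin dA × Fin dB) (Fin dA × Fin dB) ℂ)
      (E : Fin 2 → Fin 2 → Matrix (Fin dA) (Fin dA) ℂ)
      (F : Fin 2 → Fin 2 → Matrix (Fin dB) (Fin dB) ℂ),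
      Realises dA dB ρ E F P →
      ∃ (dA'' dB'' : ℕ)
        (VA : Matrix (Fin dA' × Fin dA'') (Fin dA) ℂ)
        (VB : Matrix (Fin dB' × Fin dB'') (Fin dB) ℂ)
        (σ : Matrix (Fin dA'' × Fin dB'') (Fin dA'' × Fin dB'') ℂ),
        VAᴴ * VA = 1 ∧ VBᴴ * VB = 1 ∧ σ.PosSemidef ∧ σ.trace = 1 ∧
        ∀ a b x y,
          Matrix.reindex (reorder dA' dA'' dB' dB'') (reorder dA' dA'' dB' dB'')
              ((VA ⊗ₖ VB) * ((E x a ⊗ₖ F y b) * ρ) * (VA ⊗ₖ VB)ᴴ)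
            = ((Pm x a ⊗ₖ Qm y b) * Matrix.vecMulVec ψ (star ψ)) ⊗ₖ σ) :
    -- conclusion: `P` is extremal in `Q_finite`
    ∀ (q0 q1 : ℝ), q0 ∈ Set.Ioo (0 : ℝ) 1 → q1 ∈ Set.Ioo (0 : ℝ) 1 →
      q0 + q1 = 1 → ∀ P0 P1 : Behaviour, P0 ∈ Qfinite → P1 ∈ Qfinite →
      P = q0 • P0 + q1 • P1 → P0 = P ∧ P1 = P := by
  intro q0 q1 hq0 hq1 hqsum P0 P1 hP0 hP1 hPdecomp
  have hmix : ∀ a b x y, P a b x y = q0 * P0 a b x y + q1 * P1 a b x y := by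
    intro a b x y
    rw [hPdecomp]
    rfl
  have hmix' : ∀ a b x y, P a b x y = q1 * P1 a b x y + q0 * P0 a b x y := by
    intro a b x y
    rw [hmix a b x y]
    ring
  refine ⟨?_, ?_⟩
  · exact branch_eq P dA' dB' ψ Pm Qm hcanon hselftest q0 q1 hq0.1 hq1.1 hqsum
      P0 P1 hP0 hP1 hmix
  · exact branch_eq P dA' dB' ψ Pm Qm hcanon hselftest q1 q0 hq1.1 hq0.1
      (by linarith) P1 P0 hP1 hP0 hmix'
end

section
/- Let d be a positive integer and let A₀, A₁, A₂, B₀, B₁, B₂ ∈ M_d(ℂ) be Hermitian matrices satisfying A_x² = I and B_y² = I for all x,y ∈ {0,1,2} and A_xB_y = B_yA_x for all x,y. Define W := A₀(B₀ + B₁ + B₂) + A₁(B₀ + B₁ − B₂) + A₂(B₀ − B₁), V₁ := A₀ + A₁ − B₀ − B₁, V₂ := A₀ − A₁ − B₂, V₃ := A₂ − B₀ + B₁. Then 5·I − W = (1/2)(V₁†V₁ + V₂†V₂ + V₃†V₃); in particular W ≤ 5·I in the positive semidefinite order. -/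
open Matrix Kronecker ComplexOrder

lemma half_smul_psd {d : ℕ} {M : Matrix (Fin d) (Fin d) ℂ} (hM : M.PosSemidef) :
    ((1 / 2 : ℂ) • M).PosSemidef := by
  constructor
  · rw [Matrix.IsHermitian, conjTranspose_smul, hM.1.eq]
    norm_num
  · intro x
    exact (hM.smul (show (0 : ℂ) ≤ 1 / 2 by rw [Complex.le_def]; norm_num)).2 x

/-- **Sum-of-squares decomposition for the correlation part of `I₃₃₂₂`.**
If `A_x, B_y` are commuting binary observables then
`5·I − W = ½(V₁†V₁ + V₂†V₂ + V₃†V₃)`, so `W ≤ 5·I`. -/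
theorem i3322_sos (d : ℕ) (hd : 0 < d)
    (A B : Fin 3 → Matrix (Fin d) (Fin d) ℂ)
    (hA : ∀ x, (A x).IsHermitian) (hB : ∀ y, (B y).IsHermitian)
    (hA2 : ∀ x, A x * A x = 1) (hB2 : ∀ y, B y * B y = 1)
    (hcomm : ∀ x y, A x * B y = B y * A x) :
    (5 : ℂ) • (1 : Matrix (Fin d) (Fin d) ℂ)
        - (A 0 * (B 0 + B 1 + B 2) + A 1 * (B 0 + B 1 - B 2) + A 2 * (B 0 - B 1))
      = (1 / 2 : ℂ) •
        (((A 0 + A 1 - B 0 - B 1)ᴴ * (A 0 + A 1 - B 0 - B 1))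
          + ((A 0 - A 1 - B 2)ᴴ * (A 0 - A 1 - B 2))
          + ((A 2 - B 0 + B 1)ᴴ * (A 2 - B 0 + B 1))) ∧
    ((5 : ℂ) • (1 : Matrix (Fin d) (Fin d) ℂ)
        - (A 0 * (B 0 + B 1 + B 2) + A 1 * (B 0 + B 1 - B 2)
            + A 2 * (B 0 - B 1))).PosSemidef := by
  have heq : (5 : ℂ) • (1 : Matrix (Fin d) (Fin d) ℂ)
        - (A 0 * (B 0 + B 1 + B 2) + A 1 * (B 0 + B 1 - B 2) + A 2 * (B 0 - B 1))
      = (1 / 2 : ℂ) •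
        (((A 0 + A 1 - B 0 - B 1)ᴴ * (A 0 + A 1 - B 0 - B 1))
          + ((A 0 - A 1 - B 2)ᴴ * (A 0 - A 1 - B 2))
          + ((A 2 - B 0 + B 1)ᴴ * (A 2 - B 0 + B 1))) := by
    simp only [conjTranspose_add, conjTranspose_sub, (hA 0).eq, (hA 1).eq, (hA 2).eq,
      (hB 0).eq, (hB 1).eq, (hB 2).eq]
    simp only [mul_add, add_mul, mul_sub, sub_mul, hA2, hB2, hcomm, mul_one, one_mul]
    module
  refine ⟨heq, ?_⟩
  rw [heq]
  exact half_smul_psd (((posSemidef_conjTranspose_mul_self _).add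
    (posSemidef_conjTranspose_mul_self _)).add (posSemidef_conjTranspose_mul_self _))
end

section
/- In the bipartite Bell scenario with three binary measurements per party, consider the correlation Bell function B₆·P := ⟨A₀B₀⟩ + ⟨A₀B₁⟩ + ⟨A₀B₂⟩ + ⟨A₁B₀⟩ + ⟨A₁B₁⟩ − ⟨A₁B₂⟩ + ⟨A₂B₀⟩ − ⟨A₂B₁⟩. Then max_{P∈Q} B₆·P = 5, and for every α ∈ [0, 2π] the behaviour P_α with all marginals zero, ⟨A₀B₀⟩ = ⟨A₁B₁⟩ = (3 + cos α)/4, ⟨A₀B₁⟩ = ⟨A₁B₀⟩ = (3 − cos α)/4, ⟨A₀B₂⟩ = ⟨A₂B₀⟩ = 1/2, ⟨A₁B₂⟩ = ⟨A₂B₁⟩ = −1/2, ⟨A₂B₂⟩ = cos α is a quantum behaviour attaining B₆·P_α = 5. In particular the quantum face of B₆ contains a nondegenerate line segment, so the quantum maximiser of B₆ is not unique. -/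
open Matrix Kronecker ComplexOrder BigOperators

/-- A behaviour in the bipartite Bell scenario with three binary measurements per
party: `P a b x y = P(ab|xy)` with `a, b ∈ {0,1}`, `x, y ∈ {0,1,2}`. -/
abbrev Behaviour33 : Type := Fin 2 → Fin 2 → Fin 3 → Fin 3 → ℝ

/-- `P` admits a quantum realisation of local dimension `d`. -/
def HasRealisation33 (d : ℕ) (P : Behaviour33) : Prop :=
  ∃ (ρ : Matrix (Fin d × Fin d) (Fin d × Fin d) ℂ)
    (E F : Fin 3 → Fin 2 → Matrix (Fin d) (Fin d) ℂ),
    ρ.PosSemidef ∧ ρ.trace = 1 ∧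
    (∀ x a, (E x a).PosSemidef) ∧ (∀ y b, (F y b).PosSemidef) ∧
    (∀ x, ∑ a : Fin 2, E x a = 1) ∧ (∀ y, ∑ b : Fin 2, F y b = 1) ∧
    ∀ a b x y, (P a b x y : ℂ) = ((E x a ⊗ₖ F y b) * ρ).trace

/-- The quantum set in the 3-setting bipartite scenario. -/
def Q33 : Set Behaviour33 := closure {P | ∃ d : ℕ, 0 < d ∧ HasRealisation33 d P}

def corr33 (P : Behaviour33) (x y : Fin 3) : ℝ :=
  ∑ a : Fin 2, ∑ b : Fin 2, (-1 : ℝ) ^ ((a : ℕ) + (b : ℕ)) * P a b x y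

/-- The correlation part of the `I₃₃₂₂` Bell functional. -/
def B6val (P : Behaviour33) : ℝ :=
  corr33 P 0 0 + corr33 P 0 1 + corr33 P 0 2 + corr33 P 1 0
    + corr33 P 1 1 - corr33 P 1 2 + corr33 P 2 0 - corr33 P 2 1

/-- A behaviour with vanishing marginals, built from its correlators. -/
noncomputable def fromCorr33 (c : Fin 3 → Fin 3 → ℝ) : Behaviour33 :=
  fun a b x y => (1 + (-1 : ℝ) ^ ((a : ℕ) + (b : ℕ)) * c x y) / 4

/-- The one-parameter family of maximisers of `B₆`. -/
noncomputable def Pfam (α : ℝ) : Behaviour33 :=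
  fromCorr33
    ![![(3 + Real.cos α) / 4, (3 - Real.cos α) / 4, 1 / 2],
      ![(3 - Real.cos α) / 4, (3 + Real.cos α) / 4, -(1 / 2)],
      ![1 / 2, -(1 / 2), Real.cos α]]



set_option maxHeartbeats 1000000
open scoped InnerProductSpace

open scoped MatrixOrder in
noncomputable def Matrix.PosSemidef.sqrt {n : Type*} [Fintype n] [DecidableEq n]
    {A : Matrix n n ℂ} (_ : A.PosSemidef) : Matrix n n ℂ := CFC.sqrt A

open scoped MatrixOrder in
lemma Matrix.PosSemidef.posSemidef_sqrt {n : Type*} [Fintype n] [DecidableEq n]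
    {A : Matrix n n ℂ} (hA : A.PosSemidef) : hA.sqrt.PosSemidef :=
  (CFC.sqrt_nonneg A).posSemidef

open scoped MatrixOrder in
lemma Matrix.PosSemidef.sqrt_mul_self {n : Type*} [Fintype n] [DecidableEq n]
    {A : Matrix n n ℂ} (hA : A.PosSemidef) : hA.sqrt * hA.sqrt = A :=
  CFC.sqrt_mul_sqrt_self A hA.nonneg

section helpers
variable {n m : Type*} [Fintype n] [Fintype m] [DecidableEq n] [DecidableEq m]
set_option linter.unusedSectionVars false

lemma kron_conjT (A : Matrix n n ℂ) (B : Matrix m m ℂ) : (A ⊗ₖ B)ᴴ = Aᴴ ⊗ₖ Bᴴ := by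
  ext ⟨i,j⟩ ⟨k,l⟩
  simp [conjTranspose_apply, kroneckerMap_apply, mul_comm]

lemma kron_sub_left (A B : Matrix n n ℂ) (C : Matrix m m ℂ) :
    (A - B) ⊗ₖ C = A ⊗ₖ C - B ⊗ₖ C := by
  ext ⟨i,j⟩ ⟨k,l⟩; simp [kroneckerMap_apply, sub_mul]

lemma kron_sub_right (A : Matrix n n ℂ) (B C : Matrix m m ℂ) :
    A ⊗ₖ (B - C) = A ⊗ₖ B - A ⊗ₖ C := by
  ext ⟨i,j⟩ ⟨k,l⟩; simp [kroneckerMap_apply, mul_sub]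

lemma psd_trace_nonneg {M : Matrix n n ℂ} (hM : M.PosSemidef) : 0 ≤ M.trace := by
  rw [Matrix.trace]
  apply Finset.sum_nonneg
  intro i _
  have h := hM.dotProduct_mulVec_nonneg (Pi.single i 1)
  have e : (star (Pi.single i 1) : n → ℂ) ⬝ᵥ M *ᵥ Pi.single i 1 = M i i := by
    simp [dotProduct, mulVec_single, Pi.single_apply]
  rw [e] at h
  simpa [Matrix.diag] using h

lemma psd_trace_mul_nonneg {C ρ : Matrix n n ℂ} (hC : C.PosSemidef) (hρ : ρ.PosSemidef) :
    0 ≤ (C * ρ).trace := by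
  have h1 : (C * ρ).trace = (hC.sqrt * ρ * hC.sqrtᴴ).trace := by
    rw [hC.posSemidef_sqrt.isHermitian.eq,
      Matrix.trace_mul_comm (hC.sqrt * ρ) hC.sqrt, ← Matrix.mul_assoc, hC.sqrt_mul_self,
      Matrix.trace_mul_comm]
  rw [h1]
  exact psd_trace_nonneg (hρ.mul_mul_conjTranspose_same hC.sqrt)

lemma kron_one_psd {X : Matrix n n ℂ} (hX : X.PosSemidef) : (X ⊗ₖ (1 : Matrix m m ℂ)).PosSemidef := by
  have h : X ⊗ₖ (1 : Matrix m m ℂ) = (hX.sqrt ⊗ₖ (1 : Matrix m m ℂ))ᴴ * (hX.sqrt ⊗ₖ 1) := by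
    rw [kron_conjT, conjTranspose_one, hX.posSemidef_sqrt.isHermitian.eq,
      ← Matrix.mul_kronecker_mul, hX.sqrt_mul_self, Matrix.one_mul]
  rw [h]
  exact Matrix.posSemidef_conjTranspose_mul_self _

lemma one_kron_psd {X : Matrix m m ℂ} (hX : X.PosSemidef) : ((1 : Matrix n n ℂ) ⊗ₖ X).PosSemidef := by
  have h : (1 : Matrix n n ℂ) ⊗ₖ X = ((1 : Matrix n n ℂ) ⊗ₖ hX.sqrt)ᴴ * (1 ⊗ₖ hX.sqrt) := by
    rw [kron_conjT, conjTranspose_one, hX.posSemidef_sqrt.isHermitian.eq,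
      ← Matrix.mul_kronecker_mul, hX.sqrt_mul_self, Matrix.one_mul]
  rw [h]
  exact Matrix.posSemidef_conjTranspose_mul_self _

end helpers

noncomputable def ι {n : Type*} [Fintype n] (M : Matrix n n ℂ) : EuclideanSpace ℂ (n × n) :=
  (WithLp.equiv 2 ((n × n) → ℂ)).symm (fun p => M p.1 p.2)

lemma ι_inner {n : Type*} [Fintype n] (M N : Matrix n n ℂ) :
    ⟪ι M, ι N⟫_ℂ = (Mᴴ * N).trace := by
  simp only [ι, PiLp.inner_apply, RCLike.inner_apply, WithLp.equiv_symm_apply, PiLp.toLp_apply,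
    Matrix.trace, Matrix.diag, Matrix.mul_apply, Matrix.conjTranspose_apply]
  rw [Fintype.sum_prod_type, Finset.sum_comm]
  simp [mul_comm]

lemma ι_norm_sq {n : Type*} [Fintype n] (M : Matrix n n ℂ) :
    (‖ι M‖ : ℝ) ^ 2 = ((Mᴴ * M).trace).re := by
  rw [← ι_inner, ← inner_self_eq_norm_sq (𝕜 := ℂ)]
  rfl

lemma inner_trace {n : Type*} [Fintype n] [DecidableEq n] (X Y s ρ : Matrix n n ℂ)
    (hss : s * s = ρ) (hsH : sᴴ = s) (hXH : Xᴴ = X) :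
    ⟪ι (X * s), ι (Y * s)⟫_ℂ = (X * Y * ρ).trace := by
  rw [ι_inner, conjTranspose_mul, hsH, hXH, Matrix.mul_assoc, Matrix.trace_mul_comm]
  rw [Matrix.mul_assoc X (Y * s) s, Matrix.mul_assoc Y s s, hss, ← Matrix.mul_assoc]

lemma norm_sq_trace {n : Type*} [Fintype n] [DecidableEq n] (X s ρ : Matrix n n ℂ)
    (hss : s * s = ρ) (hsH : sᴴ = s) (hXH : Xᴴ = X) :
    (‖ι (X * s)‖ : ℝ) ^ 2 = ((X * X * ρ).trace).re := by
  rw [← inner_trace X X s ρ hss hsH hXH, ← inner_self_eq_norm_sq (𝕜 := ℂ)]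
  rfl

lemma vec_bound {V : Type*} [NormedAddCommGroup V] [InnerProductSpace ℂ V]
    (u0 u1 u2 v0 v1 v2 : V)
    (hu0 : ‖u0‖ ≤ 1) (hu1 : ‖u1‖ ≤ 1) (hu2 : ‖u2‖ ≤ 1)
    (hv0 : ‖v0‖ ≤ 1) (hv1 : ‖v1‖ ≤ 1) (hv2 : ‖v2‖ ≤ 1) :
    (⟪u0, v0 + v1 + v2⟫_ℂ).re + (⟪u1, v0 + v1 - v2⟫_ℂ).re + (⟪u2, v0 - v1⟫_ℂ).re ≤ 5 := by
  have key : ∀ (u w : V), ‖u‖ ≤ 1 → (⟪u, w⟫_ℂ).re ≤ ‖w‖ := by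
    intro u w hu
    calc (⟪u, w⟫_ℂ).re ≤ ‖u‖ * ‖w‖ := re_inner_le_norm (𝕜 := ℂ) u w
    _ ≤ 1 * ‖w‖ := by gcongr
    _ = ‖w‖ := one_mul _
  have h0 := key u0 (v0 + v1 + v2) hu0
  have h1 := key u1 (v0 + v1 - v2) hu1
  have h2 := key u2 (v0 - v1) hu2
  set x := ‖v0 + v1 + v2‖ with hxdef
  set y := ‖v0 + v1 - v2‖ with hydef
  set z := ‖v0 - v1‖ with hzdef
  set a := ‖v0 + v1‖ with hadef
  have hpar1 : x ^ 2 + y ^ 2 = 2 * a ^ 2 + 2 * ‖v2‖ ^ 2 := by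
    have := parallelogram_law_with_norm ℂ (v0 + v1) v2
    rw [hxdef, hydef, hadef]
    nlinarith [this]
  have hpar2 : a ^ 2 + z ^ 2 = 2 * ‖v0‖ ^ 2 + 2 * ‖v1‖ ^ 2 := by
    have := parallelogram_law_with_norm ℂ v0 v1
    nlinarith [this]
  have hx : 0 ≤ x := norm_nonneg _
  have hy : 0 ≤ y := norm_nonneg _
  have hz : 0 ≤ z := norm_nonneg _
  have ha : 0 ≤ a := norm_nonneg _
  have hv0' : 0 ≤ ‖v0‖ := norm_nonneg _
  have hv1' : 0 ≤ ‖v1‖ := norm_nonneg _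
  have hv2' : 0 ≤ ‖v2‖ := norm_nonneg _
  have e2 : ‖v2‖ ^ 2 ≤ 1 := by nlinarith [hv2, hv2']
  have e0 : ‖v0‖ ^ 2 ≤ 1 := by nlinarith [hv0, hv0']
  have e1 : ‖v1‖ ^ 2 ≤ 1 := by nlinarith [hv1, hv1']
  have hxy : x ^ 2 + y ^ 2 ≤ 2 * a ^ 2 + 2 := by linarith
  have hz2 : z ^ 2 ≤ 4 - a ^ 2 := by linarith
  have goal : x + y + z ≤ 5 := by
    nlinarith [sq_nonneg (x - y), sq_nonneg (x + y - 4 * z), sq_nonneg (x + y + z - 5),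
      sq_nonneg (x + y - 2 * z), mul_nonneg (add_nonneg hx hy) hz]
  linarith [h0, h1, h2]

lemma b6_bound (P : Behaviour33) (d : ℕ) (h : HasRealisation33 d P) : B6val P ≤ 5 := by
  obtain ⟨ρ, E, F, hρ, hρtr, hE, hF, hEsum, hFsum, hP⟩ := h
  set A : Fin 3 → Matrix (Fin d) (Fin d) ℂ := fun x => E x 0 - E x 1 with hAdef
  set B : Fin 3 → Matrix (Fin d) (Fin d) ℂ := fun y => F y 0 - F y 1 with hBdef
  have hAH : ∀ x, (A x)ᴴ = A x := fun x => by
    simp [hAdef, conjTranspose_sub, (hE x 0).isHermitian.eq, (hE x 1).isHermitian.eq]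
  have hBH : ∀ y, (B y)ᴴ = B y := fun y => by
    simp [hBdef, conjTranspose_sub, (hF y 0).isHermitian.eq, (hF y 1).isHermitian.eq]
  -- 1 - A² is PSD
  have contraction : ∀ (G : Fin 2 → Matrix (Fin d) (Fin d) ℂ), (∀ a, (G a).PosSemidef) →
      G 0 + G 1 = 1 → ((1 : Matrix (Fin d) (Fin d) ℂ) - (G 0 - G 1) * (G 0 - G 1)).PosSemidef := by
    intro G hG hsum
    set S := (hG 0).sqrt with hSdef
    have hS : S * S = G 0 := (hG 0).sqrt_mul_self
    have hSH : Sᴴ = S := (hG 0).posSemidef_sqrt.isHermitian.eq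
    have hG1 : G 1 = 1 - G 0 := by
      rw [← hsum]; abel
    have key : (1 : Matrix (Fin d) (Fin d) ℂ) - (G 0 - G 1) * (G 0 - G 1)
        = (S + S) * G 1 * (S + S)ᴴ := by
      rw [conjTranspose_add, hSH, hG1, ← hS]
      noncomm_ring
    rw [key]
    exact (hG 1).mul_mul_conjTranspose_same (S + S)
  have hA1 : ∀ x, ((1 : Matrix (Fin d) (Fin d) ℂ) - A x * A x).PosSemidef := by
    intro x
    refine contraction (fun a => E x a) (fun a => hE x a) ?_
    have := hEsum x; rwa [Fin.sum_univ_two] at this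
  have hB1 : ∀ y, ((1 : Matrix (Fin d) (Fin d) ℂ) - B y * B y).PosSemidef := by
    intro y
    refine contraction (fun b => F y b) (fun b => hF y b) ?_
    have := hFsum y; rwa [Fin.sum_univ_two] at this
  set s := hρ.sqrt with hsdef
  have hss : s * s = ρ := hρ.sqrt_mul_self
  have hsH : sᴴ = s := hρ.posSemidef_sqrt.isHermitian.eq
  set u : Fin 3 → EuclideanSpace ℂ ((Fin d × Fin d) × (Fin d × Fin d)) :=
    fun x => ι ((A x ⊗ₖ (1 : Matrix (Fin d) (Fin d) ℂ)) * s) with hudef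
  set v : Fin 3 → EuclideanSpace ℂ ((Fin d × Fin d) × (Fin d × Fin d)) :=
    fun y => ι (((1 : Matrix (Fin d) (Fin d) ℂ) ⊗ₖ B y) * s) with hvdef
  -- correlators as inner products
  have hcorr : ∀ x y, corr33 P x y = (⟪u x, v y⟫_ℂ).re := by
    intro x y
    have h1 : ⟪u x, v y⟫_ℂ = ((A x ⊗ₖ B y) * ρ).trace := by
      have hXH : (A x ⊗ₖ (1 : Matrix (Fin d) (Fin d) ℂ))ᴴ = A x ⊗ₖ 1 := by
        rw [kron_conjT, conjTranspose_one, hAH]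
      rw [hudef, hvdef]
      rw [inner_trace _ _ s ρ hss hsH hXH, ← Matrix.mul_kronecker_mul, Matrix.one_mul,
        Matrix.mul_one]
    have h2 : ((A x ⊗ₖ B y) * ρ).trace
        = ((E x 0 ⊗ₖ F y 0) * ρ).trace - ((E x 0 ⊗ₖ F y 1) * ρ).trace
          - ((E x 1 ⊗ₖ F y 0) * ρ).trace + ((E x 1 ⊗ₖ F y 1) * ρ).trace := by
      rw [hAdef, hBdef]
      simp only [kron_sub_left, kron_sub_right, Matrix.sub_mul, Matrix.trace_sub]
      ring
    have h3 : (corr33 P x y : ℂ) = ⟪u x, v y⟫_ℂ := by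
      rw [h1, h2, corr33]
      push_cast
      rw [Fin.sum_univ_two, Fin.sum_univ_two]
      simp only [hP]
      norm_num
      ring
    rw [← h3, Complex.ofReal_re]
  -- norms at most one
  have hnorm : ∀ (M : Matrix (Fin d) (Fin d) ℂ), Mᴴ = M →
      ((1 : Matrix (Fin d) (Fin d) ℂ) - M * M).PosSemidef →
      ‖ι ((M ⊗ₖ (1 : Matrix (Fin d) (Fin d) ℂ)) * s)‖ ≤ 1 := by
    intro M hMH hM1
    have hXH : (M ⊗ₖ (1 : Matrix (Fin d) (Fin d) ℂ))ᴴ = M ⊗ₖ 1 := by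
      rw [kron_conjT, conjTranspose_one, hMH]
    have hsq : ‖ι ((M ⊗ₖ (1 : Matrix (Fin d) (Fin d) ℂ)) * s)‖ ^ 2
        = ((((M * M) ⊗ₖ (1 : Matrix (Fin d) (Fin d) ℂ)) * ρ).trace).re := by
      rw [norm_sq_trace _ s ρ hss hsH hXH, ← Matrix.mul_kronecker_mul, Matrix.one_mul]
    have hpos : 0 ≤ ((((1 : Matrix (Fin d) (Fin d) ℂ) - M * M) ⊗ₖ (1 : Matrix (Fin d) (Fin d) ℂ)) * ρ).trace :=
      psd_trace_mul_nonneg (kron_one_psd hM1) hρ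
    have hexp : ((((1 : Matrix (Fin d) (Fin d) ℂ) - M * M) ⊗ₖ (1 : Matrix (Fin d) (Fin d) ℂ)) * ρ).trace
        = 1 - (((M * M) ⊗ₖ (1 : Matrix (Fin d) (Fin d) ℂ)) * ρ).trace := by
      rw [kron_sub_left, Matrix.sub_mul, Matrix.trace_sub, Matrix.one_kronecker_one,
        Matrix.one_mul, hρtr]
    rw [hexp] at hpos
    have hre : ((((M * M) ⊗ₖ (1 : Matrix (Fin d) (Fin d) ℂ)) * ρ).trace).re ≤ 1 := by
      have h5 := Complex.le_def.mp hpos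
      simp only [Complex.sub_re, Complex.one_re, Complex.zero_re] at h5
      linarith [h5.1]
    nlinarith [norm_nonneg (ι ((M ⊗ₖ (1 : Matrix (Fin d) (Fin d) ℂ)) * s)), hsq]
  have hnorm' : ∀ (M : Matrix (Fin d) (Fin d) ℂ), Mᴴ = M →
      ((1 : Matrix (Fin d) (Fin d) ℂ) - M * M).PosSemidef →
      ‖ι (((1 : Matrix (Fin d) (Fin d) ℂ) ⊗ₖ M) * s)‖ ≤ 1 := by
    intro M hMH hM1
    have hXH : ((1 : Matrix (Fin d) (Fin d) ℂ) ⊗ₖ M)ᴴ = (1 : Matrix (Fin d) (Fin d) ℂ) ⊗ₖ M := by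
      rw [kron_conjT, conjTranspose_one, hMH]
    have hsq : ‖ι (((1 : Matrix (Fin d) (Fin d) ℂ) ⊗ₖ M) * s)‖ ^ 2
        = ((((1 : Matrix (Fin d) (Fin d) ℂ) ⊗ₖ (M * M)) * ρ).trace).re := by
      rw [norm_sq_trace _ s ρ hss hsH hXH, ← Matrix.mul_kronecker_mul, Matrix.one_mul]
    have hpos : 0 ≤ (((1 : Matrix (Fin d) (Fin d) ℂ) ⊗ₖ ((1 : Matrix (Fin d) (Fin d) ℂ) - M * M)) * ρ).trace :=
      psd_trace_mul_nonneg (one_kron_psd hM1) hρ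
    have hexp : (((1 : Matrix (Fin d) (Fin d) ℂ) ⊗ₖ ((1 : Matrix (Fin d) (Fin d) ℂ) - M * M)) * ρ).trace
        = 1 - (((1 : Matrix (Fin d) (Fin d) ℂ) ⊗ₖ (M * M)) * ρ).trace := by
      rw [kron_sub_right, Matrix.sub_mul, Matrix.trace_sub, Matrix.one_kronecker_one,
        Matrix.one_mul, hρtr]
    rw [hexp] at hpos
    have hre : ((((1 : Matrix (Fin d) (Fin d) ℂ) ⊗ₖ (M * M)) * ρ).trace).re ≤ 1 := by
      have h5 := Complex.le_def.mp hpos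
      simp only [Complex.sub_re, Complex.one_re, Complex.zero_re] at h5
      linarith [h5.1]
    nlinarith [norm_nonneg (ι (((1 : Matrix (Fin d) (Fin d) ℂ) ⊗ₖ M) * s)), hsq]
  have hu : ∀ x, ‖u x‖ ≤ 1 := fun x => hnorm (A x) (hAH x) (hA1 x)
  have hv : ∀ y, ‖v y‖ ≤ 1 := fun y => hnorm' (B y) (hBH y) (hB1 y)
  have main := vec_bound (u 0) (u 1) (u 2) (v 0) (v 1) (v 2)
    (hu 0) (hu 1) (hu 2) (hv 0) (hv 1) (hv 2)
  have E0 : (⟪u 0, v 0 + v 1 + v 2⟫_ℂ).re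
      = (⟪u 0, v 0⟫_ℂ).re + (⟪u 0, v 1⟫_ℂ).re + (⟪u 0, v 2⟫_ℂ).re := by
    simp [inner_add_right]
  have E1 : (⟪u 1, v 0 + v 1 - v 2⟫_ℂ).re
      = (⟪u 1, v 0⟫_ℂ).re + (⟪u 1, v 1⟫_ℂ).re - (⟪u 1, v 2⟫_ℂ).re := by
    simp [inner_add_right, inner_sub_right]
  have E2 : (⟪u 2, v 0 - v 1⟫_ℂ).re = (⟪u 2, v 0⟫_ℂ).re - (⟪u 2, v 1⟫_ℂ).re := by
    simp [inner_sub_right]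
  rw [B6val, hcorr 0 0, hcorr 0 1, hcorr 0 2, hcorr 1 0, hcorr 1 1, hcorr 1 2,
    hcorr 2 0, hcorr 2 1]
  rw [E0, E1, E2] at main
  linarith


noncomputable def pauli (x y z : ℝ) : Matrix (Fin 2) (Fin 2) ℂ :=
  !![(z : ℂ), (x : ℂ) - (y : ℂ) * Complex.I; (x : ℂ) + (y : ℂ) * Complex.I, -(z : ℂ)]

lemma pauli_herm (x y z : ℝ) : (pauli x y z)ᴴ = pauli x y z := by
  ext i j
  fin_cases i <;> fin_cases j <;>
    simp [pauli, Matrix.conjTranspose_apply, Complex.ext_iff]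

lemma pauli_sq (x y z : ℝ) (h : x ^ 2 + y ^ 2 + z ^ 2 = 1) :
    pauli x y z * pauli x y z = 1 := by
  have hC : (x : ℂ) ^ 2 + (y : ℂ) ^ 2 + (z : ℂ) ^ 2 = 1 := by exact_mod_cast congrArg (Complex.ofReal) h
  ext i j
  fin_cases i <;> fin_cases j <;>
    simp [pauli, Matrix.mul_apply, Fin.sum_univ_two, Matrix.one_apply]
  · linear_combination hC - (y : ℂ) ^ 2 * Complex.I_sq
  · ring
  · ring
  · linear_combination hC - (y : ℂ) ^ 2 * Complex.I_sq

noncomputable def povm (A : Matrix (Fin 2) (Fin 2) ℂ) (a : Fin 2) : Matrix (Fin 2) (Fin 2) ℂ :=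
  if a = 0 then (2⁻¹ : ℂ) • (1 + A) else (2⁻¹ : ℂ) • (1 - A)

lemma psd_of_proj {n : Type*} [Fintype n] [DecidableEq n] {M : Matrix n n ℂ}
    (hH : Mᴴ = M) (hP : M * M = M) : M.PosSemidef := by
  have h : M = Mᴴ * M := by rw [hH, hP]
  rw [h]
  exact Matrix.posSemidef_conjTranspose_mul_self _

lemma povm_psd {A : Matrix (Fin 2) (Fin 2) ℂ} (hH : Aᴴ = A) (hsq : A * A = 1) (a : Fin 2) :
    (povm A a).PosSemidef := by
  have hstar : star (2⁻¹ : ℂ) = 2⁻¹ := by norm_num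
  unfold povm
  split_ifs with ha
  · refine psd_of_proj ?_ ?_
    · simp only [Matrix.conjTranspose_smul, hstar, Matrix.conjTranspose_add,
        Matrix.conjTranspose_one, hH]
    · simp only [Matrix.smul_mul, Matrix.mul_smul, smul_smul]
      rw [Matrix.add_mul, Matrix.mul_add, Matrix.mul_add, hsq]
      simp only [Matrix.one_mul, Matrix.mul_one]
      rw [show ((1 : Matrix (Fin 2) (Fin 2) ℂ) + A + (A + 1)) = (2 : ℂ) • (1 + A) by
        rw [two_smul]; abel]
      rw [smul_smul]
      norm_num
  · refine psd_of_proj ?_ ?_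
    · simp only [Matrix.conjTranspose_smul, hstar, Matrix.conjTranspose_sub,
        Matrix.conjTranspose_one, hH]
    · simp only [Matrix.smul_mul, Matrix.mul_smul, smul_smul]
      rw [Matrix.sub_mul, Matrix.mul_sub, Matrix.mul_sub, hsq]
      simp only [Matrix.one_mul, Matrix.mul_one]
      rw [show ((1 : Matrix (Fin 2) (Fin 2) ℂ) - A - (A - 1)) = (2 : ℂ) • (1 - A) by
        rw [two_smul]; abel]
      rw [smul_smul]
      norm_num

lemma povm_sum (A : Matrix (Fin 2) (Fin 2) ℂ) : ∑ a : Fin 2, povm A a = 1 := by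
  rw [Fin.sum_univ_two]
  unfold povm
  rw [if_pos rfl, if_neg (by decide : (1 : Fin 2) ≠ 0), ← smul_add]
  rw [show ((1 : Matrix (Fin 2) (Fin 2) ℂ) + A + (1 - A)) = (2 : ℂ) • 1 by rw [two_smul]; abel]
  rw [smul_smul]
  norm_num

noncomputable def rho2 : Matrix (Fin 2 × Fin 2) (Fin 2 × Fin 2) ℂ :=
  Matrix.of fun p q => if p.1 = p.2 ∧ q.1 = q.2 then (2⁻¹ : ℂ) else 0

lemma rho2_psd : rho2.PosSemidef := by
  refine psd_of_proj ?_ ?_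
  · ext ⟨i,j⟩ ⟨k,l⟩
    simp only [rho2, Matrix.conjTranspose_apply, Matrix.of_apply]
    by_cases h1 : k = l <;> by_cases h2 : i = j <;> simp [h1, h2, and_comm] <;> norm_num
  · ext ⟨i,j⟩ ⟨k,l⟩
    simp only [rho2, Matrix.mul_apply, Matrix.of_apply, Fintype.sum_prod_type,
      Fin.sum_univ_two]
    by_cases h1 : i = j <;> by_cases h2 : k = l <;> simp [h1, h2] <;> norm_num

lemma rho2_trace : rho2.trace = 1 := by
  simp only [Matrix.trace, Matrix.diag, rho2, Matrix.of_apply, Fintype.sum_prod_type,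
    Fin.sum_univ_two]
  norm_num

lemma trace_kron_rho2 (M N : Matrix (Fin 2) (Fin 2) ℂ) :
    ((M ⊗ₖ N) * rho2).trace
      = (M 0 0 * N 0 0 + M 0 1 * N 0 1 + M 1 0 * N 1 0 + M 1 1 * N 1 1) / 2 := by
  simp only [Matrix.trace, Matrix.diag, Matrix.mul_apply, rho2, Matrix.of_apply,
    Matrix.kroneckerMap_apply, Fintype.sum_prod_type, Fin.sum_univ_two]
  norm_num
  ring


noncomputable def AM (α : ℝ) : Fin 3 → Matrix (Fin 2) (Fin 2) ℂ :=
  ![pauli (Real.sqrt 3 / 2) (Real.cos α / 2) (Real.sin α / 2),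
    pauli (Real.sqrt 3 / 2) (-(Real.cos α / 2)) (-(Real.sin α / 2)),
    pauli 0 1 0]

noncomputable def BM (α : ℝ) : Fin 3 → Matrix (Fin 2) (Fin 2) ℂ :=
  ![pauli (Real.sqrt 3 / 2) (-(1/2)) 0,
    pauli (Real.sqrt 3 / 2) (1/2) 0,
    pauli 0 (-(Real.cos α)) (Real.sin α)]

lemma pfam_traces (α : ℝ) : ∀ (a b : Fin 2) (x y : Fin 3),
    ((Pfam α a b x y : ℝ) : ℂ) = (((povm (AM α x) a) ⊗ₖ (povm (BM α y) b)) * rho2).trace := by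
  have hr2 : ((Real.sqrt 3 : ℝ) : ℂ) ^ 2 = 3 := by
    norm_cast
    rw [Real.sq_sqrt] <;> norm_num
  have hs2 : ((Real.sin α : ℝ) : ℂ) ^ 2 = 1 - ((Real.cos α : ℝ) : ℂ) ^ 2 := by
    norm_cast
    nlinarith [Real.sin_sq_add_cos_sq α]
  intro a b x y
  rw [trace_kron_rho2]
  fin_cases a <;> fin_cases b <;> fin_cases x <;> fin_cases y <;>
    · simp [Pfam, fromCorr33, povm, AM, BM, pauli, Matrix.smul_apply, Matrix.add_apply,
        Matrix.sub_apply, Matrix.one_apply, Fin.isValue]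
      push_cast
      ring_nf
      simp only [Complex.I_sq, hr2, hs2]
      ring_nf
      try first
        | linear_combination (1/8 : ℂ) * Complex.sin_sq_add_cos_sq (α : ℂ)
        | linear_combination (-1/8 : ℂ) * Complex.sin_sq_add_cos_sq (α : ℂ)

lemma AM_herm (α : ℝ) (x : Fin 3) : (AM α x)ᴴ = AM α x := by
  fin_cases x <;> exact pauli_herm _ _ _

lemma BM_herm (α : ℝ) (y : Fin 3) : (BM α y)ᴴ = BM α y := by
  fin_cases y <;> exact pauli_herm _ _ _

lemma AM_sq (α : ℝ) (x : Fin 3) : AM α x * AM α x = 1 := by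
  have h3 : Real.sqrt 3 ^ 2 = 3 := Real.sq_sqrt (by norm_num)
  have hsc := Real.sin_sq_add_cos_sq α
  fin_cases x
  · exact pauli_sq _ _ _ (by nlinarith)
  · exact pauli_sq _ _ _ (by nlinarith)
  · exact pauli_sq _ _ _ (by norm_num)

lemma BM_sq (α : ℝ) (y : Fin 3) : BM α y * BM α y = 1 := by
  have h3 : Real.sqrt 3 ^ 2 = 3 := Real.sq_sqrt (by norm_num)
  have hsc := Real.sin_sq_add_cos_sq α
  fin_cases y
  · exact pauli_sq _ _ _ (by nlinarith)
  · exact pauli_sq _ _ _ (by nlinarith)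
  · exact pauli_sq _ _ _ (by nlinarith)

lemma pfam_realisation (α : ℝ) : HasRealisation33 2 (Pfam α) := by
  refine ⟨rho2, fun x a => povm (AM α x) a, fun y b => povm (BM α y) b,
    rho2_psd, rho2_trace, ?_, ?_, ?_, ?_, ?_⟩
  · intro x a; exact povm_psd (AM_herm α x) (AM_sq α x) a
  · intro y b; exact povm_psd (BM_herm α y) (BM_sq α y) b
  · intro x; exact povm_sum _
  · intro y; exact povm_sum _
  · exact pfam_traces α

lemma corr_fromCorr (c : Fin 3 → Fin 3 → ℝ) (x y : Fin 3) :
    corr33 (fromCorr33 c) x y = c x y := by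
  simp [corr33, fromCorr33, Fin.sum_univ_two]
  ring

lemma pfam_value (α : ℝ) : B6val (Pfam α) = 5 := by
  rw [B6val, Pfam]
  rw [corr_fromCorr, corr_fromCorr, corr_fromCorr, corr_fromCorr, corr_fromCorr,
    corr_fromCorr, corr_fromCorr, corr_fromCorr]
  norm_num [Matrix.cons_val_zero, Matrix.cons_val_one, Matrix.head_cons, Matrix.cons_val_two,
    Matrix.tail_cons]
  ring

lemma b6_continuous : Continuous B6val := by
  unfold B6val corr33
  fun_prop

lemma q33_bound : ∀ Q ∈ Q33, B6val Q ≤ 5 := by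
  intro Q hQ
  have hclosed : IsClosed {P : Behaviour33 | B6val P ≤ 5} :=
    isClosed_le b6_continuous continuous_const
  have hsub : {P : Behaviour33 | ∃ d : ℕ, 0 < d ∧ HasRealisation33 d P}
      ⊆ {P : Behaviour33 | B6val P ≤ 5} := by
    rintro P ⟨d, _, hreal⟩
    exact b6_bound P d hreal
  exact closure_minimal hsub hclosed hQ

/-- **The quantum maximiser of `B₆` is not unique:** `β_Q(B₆) = 5` and the whole
one-parameter family `P_α` consists of quantum behaviours attaining the value `5`;
in particular the quantum face contains a nondegenerate segment. -/
theorem b6_nonunique_maximiser :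
    sSup (B6val '' Q33) = 5 ∧
    (∀ α ∈ Set.Icc (0 : ℝ) (2 * Real.pi), Pfam α ∈ Q33 ∧ B6val (Pfam α) = 5) ∧
    Pfam 0 ≠ Pfam Real.pi := by
  have hmem : ∀ α : ℝ, Pfam α ∈ Q33 :=
    fun α => subset_closure ⟨2, by norm_num, pfam_realisation α⟩
  refine ⟨?_, fun α _ => ⟨hmem α, pfam_value α⟩, ?_⟩
  · apply le_antisymm
    · apply Real.sSup_le
      · rintro x ⟨Q, hQ, rfl⟩
        exact q33_bound Q hQ
      · norm_num
    · apply le_csSup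
      · exact ⟨5, by rintro x ⟨Q, hQ, rfl⟩; exact q33_bound Q hQ⟩
      · exact ⟨Pfam 0, hmem 0, pfam_value 0⟩
  · intro h
    have h22 := congrFun (congrFun (congrFun (congrFun h 0) 0) 2) 2
    simp only [Pfam, fromCorr33, Real.cos_zero, Real.cos_pi] at h22
    norm_num [Matrix.cons_val_zero, Matrix.cons_val_one, Matrix.head_cons, Matrix.cons_val_two,
    Matrix.tail_cons] at h22
end
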